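/- arXiv:1812.00112 — 6 statements merged into one kernel-verified Lean document; each statement's English description precedes it below -/
import Mathlib

section
/- Let U be a unitary operator on a Hilbert space H which does not have 1 as an eigenvalue. Then U − 1 has dense range, and the inverse Cayley transform c⁻¹(U) := i(U + 1)(U − 1)⁻¹, defined on the range of U − 1, is a densely defined self-adjoint operator. -/
local notation "⟪" x ", " y "⟫" => @inner ℂ _ _ x y

theorem stmt4 {H : Type*} [NormedAddCommGroup H] [InnerProductSpace ℂ H] [CompleteSpace H]
    (U : H ≃ₗᵢ[ℂ] H) (h1 : ∀ x : H, U x = x → x = 0) :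
    Dense (Set.range fun ν : H => U ν - ν) ∧
    ∃ T : H →ₗ.[ℂ] H,
      (T.domain : Set H) = Set.range (fun ν : H => U ν - ν) ∧
      (∀ (ν : H) (hν : U ν - ν ∈ T.domain),
        T ⟨U ν - ν, hν⟩ = Complex.I • (U ν + ν)) ∧
      IsSelfAdjoint T := by
  classical
  set L : H →ₗ[ℂ] H := (U.toLinearEquiv : H →ₗ[ℂ] H) - LinearMap.id with hLdef
  have hLapp : ∀ ν : H, L ν = U ν - ν := fun ν => rfl
  have hinj : Function.Injective L := by
    rw [← LinearMap.ker_eq_bot, Submodule.eq_bot_iff]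
    intro x hx
    have hx' : U x - x = 0 := hLapp x ▸ LinearMap.mem_ker.mp hx
    exact h1 x (sub_eq_zero.mp hx')
  have hrange : (LinearMap.range L : Set H) = Set.range (fun ν : H => U ν - ν) := by
    ext x
    simp [LinearMap.mem_range, hLapp, Set.mem_range]
  -- inner product moves across U
  have hUinner : ∀ a ν : H, ⟪a, U ν⟫ = ⟪U.symm a, ν⟫ := by
    intro a ν
    rw [← U.inner_map_map (U.symm a) ν, U.apply_symm_apply]
  have hdense : Dense (LinearMap.range L : Set H) := by
    rw [Submodule.dense_iff_topologicalClosure_eq_top,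
      Submodule.topologicalClosure_eq_top_iff, Submodule.eq_bot_iff]
    intro x hx
    have hx' : ∀ ν : H, ⟪U ν - ν, x⟫ = 0 := fun ν =>
      (Submodule.mem_orthogonal _ x).mp hx (L ν) (LinearMap.mem_range_self L ν)
    have h2 : U.symm x - x = 0 := by
      have h3 : ∀ ν : H, ⟪ν, U.symm x - x⟫ = 0 := by
        intro ν
        have h0 := hx' ν
        have h4 : ⟪U ν, x⟫ = ⟪ν, U.symm x⟫ := by
          conv_lhs => rw [← U.apply_symm_apply x]
          exact U.inner_map_map ν (U.symm x)
        rw [inner_sub_left, sub_eq_zero, h4] at h0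
        rw [inner_sub_right, h0, sub_self]
      exact inner_self_eq_zero.mp (h3 (U.symm x - x))
    have h5 : U x = x := by
      have : U.symm x = x := by rwa [sub_eq_zero] at h2
      conv_lhs => rw [← this]
      exact U.apply_symm_apply x
    simp [h1 x h5]
  -- the operator
  let e := LinearEquiv.ofInjective L hinj
  let f : H →ₗ[ℂ] H := Complex.I • ((U.toLinearEquiv : H →ₗ[ℂ] H) + LinearMap.id)
  have hfapp : ∀ ν : H, f ν = Complex.I • (U ν + ν) := fun ν => rfl
  set T : H →ₗ.[ℂ] H := ⟨LinearMap.range L, f ∘ₗ (e.symm : LinearMap.range L →ₗ[ℂ] H)⟩ with hTdef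
  have hTdom : T.domain = LinearMap.range L := rfl
  have hTapp : ∀ (ν : H) (hν : L ν ∈ T.domain), T ⟨L ν, hν⟩ = Complex.I • (U ν + ν) := by
    intro ν hν
    have he : (⟨L ν, hν⟩ : LinearMap.range L) = e ν := by
      apply Subtype.ext
      simp [e, LinearEquiv.ofInjective_apply]
    show f (e.symm ⟨L ν, hν⟩) = Complex.I • (U ν + ν)
    rw [he, e.symm_apply_apply, hfapp]
  have hdenseT : Dense (T.domain : Set H) := hdense
  -- symmetry
  have hsymm : T.IsFormalAdjoint T := by
    rintro ⟨x, hx⟩ ⟨y, hy⟩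
    obtain ⟨μ, rfl⟩ : ∃ μ, L μ = x := id hx; obtain ⟨ν, rfl⟩ : ∃ ν, L ν = y := id hy
    rw [hTapp μ _, hTapp ν _]
    simp only [hLapp]
    rw [inner_smul_left, inner_smul_right]
    simp only [inner_add_left, inner_add_right, inner_sub_left, inner_sub_right,
      U.inner_map_map, Complex.conj_I]
    ring
  have hle : T ≤ T.adjoint := hsymm.le_adjoint hdenseT
  have hUsymm : ∀ a b : H, ⟪U.symm a, b⟫ = ⟪a, U b⟫ := by
    intro a b
    rw [← U.inner_map_map (U.symm a) b, U.apply_symm_apply]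
  have key : ∀ z : T.adjoint.domain, ∃ hz : (z : H) ∈ T.domain, T ⟨z, hz⟩ = T.adjoint z := by
    intro z
    have hfa : T.adjoint.IsFormalAdjoint T := LinearPMap.adjoint_isFormalAdjoint hdenseT
    have hrel : ∀ ν : H, ⟪(T.adjoint z : H), U ν - ν⟫ = ⟪(z : H), Complex.I • (U ν + ν)⟫ := by
      intro ν
      have h0 := hfa z ⟨L ν, LinearMap.mem_range_self L ν⟩
      rw [hTapp ν _] at h0
      exact h0
    obtain ⟨x, hxz⟩ : ∃ x : H, x = (z : H) := ⟨_, rfl⟩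
    obtain ⟨y, hyz⟩ : ∃ y : H, y = (T.adjoint z : H) := ⟨_, rfl⟩
    rw [← hxz] at hrel ⊢
    rw [← hyz] at hrel ⊢
    have hrel2 : U.symm (-(Complex.I • x) - y) = Complex.I • x - y := by
      rw [← sub_eq_zero]
      apply (inner_self_eq_zero (𝕜 := ℂ)).mp
      have hg : ∀ ν : H, ⟪U.symm (-(Complex.I • x) - y) - (Complex.I • x - y), ν⟫ = 0 := by
        intro ν
        have h0 := hrel ν
        rw [inner_sub_right, inner_smul_right, inner_add_right] at h0
        rw [inner_sub_left, hUsymm]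
        simp only [inner_sub_left, inner_neg_left, inner_smul_left, Complex.conj_I]
        linear_combination -h0
      exact hg _
    have hUa : U (Complex.I • x - y) = -(Complex.I • x) - y := by
      rw [← hrel2, U.apply_symm_apply]
    have hUμ : U ((Complex.I / 2) • (Complex.I • x - y))
        = (Complex.I / 2) • (-(Complex.I • x) - y) := by
      rw [map_smul, hUa]
    have hxμ : L ((Complex.I / 2) • (Complex.I • x - y)) = x := by
      rw [hLapp, hUμ]
      match_scalars
      · linear_combination -Complex.I_mul_I
      · ring
    have hyμ : Complex.I • (U ((Complex.I / 2) • (Complex.I • x - y))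
        + (Complex.I / 2) • (Complex.I • x - y)) = y := by
      rw [hUμ]
      match_scalars
      · ring
      · linear_combination -Complex.I_mul_I
    have hz : x ∈ T.domain := hxμ ▸ LinearMap.mem_range_self L _
    refine ⟨hz, ?_⟩
    have he : (⟨x, hz⟩ : T.domain)
        = ⟨L ((Complex.I / 2) • (Complex.I • x - y)), LinearMap.mem_range_self L _⟩ :=
      Subtype.ext hxμ.symm
    rw [he, hTapp _ _, hyμ]
  have hge : T.adjoint ≤ T := by
    constructor
    · intro x hx
      exact (key ⟨x, hx⟩).1
    · intro a b hab
      obtain ⟨hz, hz2⟩ := key a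
      rw [← hz2]
      exact congrArg _ (Subtype.ext hab)
  have hsa : IsSelfAdjoint T := by
    rw [LinearPMap.isSelfAdjoint_def]
    exact le_antisymm hge hle
  exact ⟨hrange ▸ hdense, T, hrange ▸ rfl, fun ν hν => hTapp ν hν, hsa⟩
end

section
/- The Cayley transform D ↦ (D + i)(D − i)⁻¹ is a bijection from the set of densely defined self-adjoint unbounded operators on a Hilbert space H to the set of unitary operators on H which do not have 1 as an eigenvalue, with inverse U ↦ i(U + 1)(U − 1)⁻¹. -/
set_option linter.unusedSectionVars false
set_option linter.unusedTactic false
set_option maxHeartbeats 1000000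

open scoped LinearPMap ComplexConjugate
open Complex LinearPMap Filter

noncomputable section CayleyAux

variable {H : Type*} [NormedAddCommGroup H] [InnerProductSpace ℂ H] [CompleteSpace H]

local notation "⟪" x ", " y "⟫" => @inner ℂ _ _ x y

namespace Cayley

variable (D : H →ₗ.[ℂ] H)

/-- `D + c`. -/
def Top (c : ℂ) : D.domain →ₗ[ℂ] H := D.toFun + c • D.domain.subtype

lemma Top_apply (c : ℂ) (ξ : D.domain) : Top D c ξ = D ξ + c • (ξ : H) := rfl

variable {D} (hD : IsSelfAdjoint D)

include hD

lemma symm_inner (ξ η : D.domain) : ⟪D ξ, (η : H)⟫ = ⟪(ξ : H), D η⟫ := by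
  have hdom : D†.domain = D.domain := congrArg LinearPMap.domain hD
  have hle : D† ≤ D := le_of_eq hD
  have h := LinearPMap.adjoint_isFormalAdjoint hD.dense_domain (T := D)
  have hξ : (ξ : H) ∈ D†.domain := by rw [hdom]; exact ξ.2
  have h2 : D† ⟨(ξ : H), hξ⟩ = D ξ := hle.2 rfl
  simpa [h2] using h ⟨(ξ : H), hξ⟩ η

lemma inner_self_real (ξ : D.domain) : conj ⟪D ξ, (ξ : H)⟫ = ⟪D ξ, (ξ : H)⟫ := by
  rw [inner_conj_symm, symm_inner hD]

lemma norm_Top_sq (c : ℂ) (hc : c = Complex.I ∨ c = -Complex.I) (ξ : D.domain) :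
    ‖Top D c ξ‖ ^ 2 = ‖D ξ‖ ^ 2 + ‖(ξ : H)‖ ^ 2 := by
  have hre : RCLike.re ⟪D ξ, c • (ξ : H)⟫ = 0 := by
    have him : (⟪D ξ, (ξ : H)⟫).im = 0 := by
      have := inner_self_real hD ξ
      have := congrArg Complex.im this
      simpa using by linarith [Complex.conj_im ⟪D ξ, (ξ : H)⟫, this]
    rcases hc with rfl | rfl <;>
      simp [inner_smul_right, RCLike.re_to_complex, Complex.mul_re, Complex.mul_im, him]
  have hnc : ‖c‖ = 1 := by rcases hc with rfl | rfl <;> simp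
  rw [Top_apply, @norm_add_sq ℂ, hre, norm_smul, hnc]
  push_cast
  ring

lemma norm_le_Top (c : ℂ) (hc : c = Complex.I ∨ c = -Complex.I) (ξ : D.domain) :
    ‖(ξ : H)‖ ≤ ‖Top D c ξ‖ := by
  have h := norm_Top_sq hD c hc ξ
  nlinarith [norm_nonneg (Top D c ξ), norm_nonneg ((ξ : H)), norm_nonneg (D ξ)]

lemma norm_Top_eq (ξ : D.domain) :
    ‖Top D Complex.I ξ‖ = ‖Top D (-Complex.I) ξ‖ := by
  have h1 := norm_Top_sq hD Complex.I (Or.inl rfl) ξ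
  have h2 := norm_Top_sq hD (-Complex.I) (Or.inr rfl) ξ
  nlinarith [norm_nonneg (Top D Complex.I ξ), norm_nonneg (Top D (-Complex.I) ξ)]

/-- Sequential closedness of a self-adjoint operator. -/
lemma closed (f : ℕ → D.domain) (x y : H)
    (hx : Tendsto (fun n => ((f n : H))) atTop (nhds x))
    (hy : Tendsto (fun n => D (f n)) atTop (nhds y)) :
    ∃ hx : x ∈ D.domain, D ⟨x, hx⟩ = y := by
  have key : ∀ v : D.domain, ⟪y, (v : H)⟫ = ⟪x, D v⟫ := by
    intro v
    have t1 : Tendsto (fun n => ⟪D (f n), (v : H)⟫) atTop (nhds ⟪y, (v : H)⟫) :=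
      hy.inner tendsto_const_nhds
    have t2 : Tendsto (fun n => ⟪D (f n), (v : H)⟫) atTop (nhds ⟪x, D v⟫) := by
      have : (fun n => ⟪D (f n), (v : H)⟫) = fun n => ⟪((f n : H)), D v⟫ := by
        funext n; exact symm_inner hD (f n) v
      rw [this]
      exact hx.inner tendsto_const_nhds
    exact tendsto_nhds_unique t1 t2
  have hmem : x ∈ D†.domain :=
    LinearPMap.mem_adjoint_domain_of_exists x ⟨y, fun v => key v⟩
  have hval : D† ⟨x, hmem⟩ = y :=
    LinearPMap.adjoint_apply_eq hD.dense_domain ⟨x, hmem⟩ (fun v => key v)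
  have hle : D† ≤ D := le_of_eq hD
  exact ⟨hle.1 hmem, by rw [← hval]; exact (hle.2 rfl).symm⟩

/-- The range of `D ± i` is everything. -/
lemma Top_surjective (c : ℂ) (hc : c = Complex.I ∨ c = -Complex.I) :
    LinearMap.range (Top D c) = ⊤ := by
  set K := LinearMap.range (Top D c) with hK
  have hc0 : c ≠ 0 := by rcases hc with rfl | rfl <;> simp [Complex.I_ne_zero]
  have hcconj : conj c = -c := by rcases hc with rfl | rfl <;> simp
  -- closedness of the range
  have hclosed : IsClosed (K : Set H) := by
    refine IsSeqClosed.isClosed ?_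
    intro g y hg hgy
    choose f hf using hg
    have hcauchy : CauchySeq fun n => ((f n : H)) := by
      have hgc : CauchySeq g := hgy.cauchySeq
      rw [Metric.cauchySeq_iff] at hgc ⊢
      intro ε hε
      obtain ⟨N, hN⟩ := hgc ε hε
      refine ⟨N, fun m hm n hn => ?_⟩
      have hle : dist ((f m : H)) ((f n : H)) ≤ dist (g m) (g n) := by
        rw [dist_eq_norm, dist_eq_norm, ← hf m, ← hf n]
        rw [← _root_.map_sub (Top D c) (f m) (f n)]
        have := norm_le_Top hD c hc (f m - f n)
        simpa using this
      exact lt_of_le_of_lt hle (hN m hm n hn)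
    obtain ⟨x, hxlim⟩ := cauchySeq_tendsto_of_complete hcauchy
    have hDlim : Tendsto (fun n => D (f n)) atTop (nhds (y - c • x)) := by
      have : ∀ n, D (f n) = g n - c • ((f n : H)) := by
        intro n; rw [← hf n, Top_apply]; abel
      simp only [this]
      exact hgy.sub (hxlim.const_smul c)
    obtain ⟨hxmem, hxval⟩ := closed hD f x (y - c • x) hxlim hDlim
    exact ⟨⟨x, hxmem⟩, by rw [Top_apply, hxval]; abel⟩
  -- trivial orthogonal complement
  have horth : Kᗮ = ⊥ := by
    rw [Submodule.eq_bot_iff]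
    intro x hx
    rw [Submodule.mem_orthogonal] at hx
    have key : ∀ v : D.domain, ⟪c • x, (v : H)⟫ = ⟪x, D v⟫ := by
      intro v
      have h0 : ⟪x, Top D c v⟫ = 0 := by
        rw [← inner_eq_zero_symm]
        exact hx _ (LinearMap.mem_range_self _ v)
      rw [Top_apply, inner_add_right, inner_smul_right] at h0
      rw [inner_smul_left, hcconj]
      linear_combination -h0
    have hmem : x ∈ D†.domain :=
      LinearPMap.mem_adjoint_domain_of_exists x ⟨c • x, fun v => key v⟩
    have hval : D† ⟨x, hmem⟩ = c • x :=
      LinearPMap.adjoint_apply_eq hD.dense_domain ⟨x, hmem⟩ (fun v => key v)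
    have hle : D† ≤ D := le_of_eq hD
    have hxd : x ∈ D.domain := hle.1 hmem
    have hvald : D ⟨x, hxd⟩ = c • x := by rw [← hval]; exact (hle.2 rfl).symm
    have hsy := symm_inner hD ⟨x, hxd⟩ ⟨x, hxd⟩
    rw [hvald] at hsy
    simp only [inner_smul_left, inner_smul_right, hcconj] at hsy
    have hxx : ⟪x, x⟫ = 0 := by
      have : (2 * c) * ⟪x, x⟫ = 0 := by linear_combination -hsy
      rcases mul_eq_zero.mp this with h | h
      · exact absurd h (by simpa using hc0)
      · exact h
    exact inner_self_eq_zero.mp hxx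
  have : CompleteSpace K := hclosed.completeSpace_coe
  exact Submodule.orthogonal_eq_bot_iff.mp horth

lemma Top_injective (c : ℂ) (hc : c = Complex.I ∨ c = -Complex.I) :
    Function.Injective (Top D c) := by
  intro a b h
  have h0 : ‖((a - b : D.domain) : H)‖ ≤ ‖Top D c (a - b)‖ := norm_le_Top hD c hc _
  rw [_root_.map_sub (Top D c) a b, h, sub_self, norm_zero] at h0
  have h1 : ((a - b : D.domain) : H) = 0 := norm_le_zero_iff.mp h0
  have h2 : ((a : H) - b) = 0 := by rw [← Submodule.coe_sub]; exact h1
  exact Subtype.ext (sub_eq_zero.mp h2)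

/-- `D - i` as a linear equivalence from the domain onto `H`. -/
def emD : D.domain ≃ₗ[ℂ] H :=
  LinearEquiv.ofBijective (Top D (-Complex.I))
    ⟨Top_injective hD _ (Or.inr rfl),
     LinearMap.range_eq_top.mp (Top_surjective hD _ (Or.inr rfl))⟩

/-- The Cayley transform as a linear equivalence. -/
def U0 : H ≃ₗ[ℂ] H :=
  (emD hD).symm.trans
    (LinearEquiv.ofBijective (Top D Complex.I)
      ⟨Top_injective hD _ (Or.inl rfl),
       LinearMap.range_eq_top.mp (Top_surjective hD _ (Or.inl rfl))⟩)

lemma U0_apply (ξ : D.domain) : U0 hD (Top D (-Complex.I) ξ) = Top D Complex.I ξ := by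
  have h1 : (emD hD).symm (Top D (-Complex.I) ξ) = ξ := by
    rw [(emD hD).symm_apply_eq]; rfl
  rw [U0, LinearEquiv.trans_apply, h1]
  rfl

lemma U0_norm_map (y : H) : ‖U0 hD y‖ = ‖y‖ := by
  obtain ⟨ξ, rfl⟩ := (emD hD).surjective y
  have he : (emD hD) ξ = Top D (-Complex.I) ξ := rfl
  rw [he, U0_apply hD ξ]
  exact norm_Top_eq hD ξ

/-- The Cayley transform as a unitary element. -/
def Uu : unitary (H →L[ℂ] H) :=
  Unitary.linearIsometryEquiv.symm ⟨U0 hD, U0_norm_map hD⟩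

lemma Uu_coe_apply (x : H) : ((Uu hD : H →L[ℂ] H) : H → H) x = U0 hD x := by
  simp only [Uu, Unitary.coe_symm_linearIsometryEquiv_apply]
  rfl

lemma Uu_apply (ξ : D.domain) :
    (Uu hD : H →L[ℂ] H) (Top D (-Complex.I) ξ) = Top D Complex.I ξ := by
  rw [Uu_coe_apply, U0_apply]

lemma Uu_fixed (x : H) (hx : (Uu hD : H →L[ℂ] H) x = x) : x = 0 := by
  rw [Uu_coe_apply] at hx
  obtain ⟨ξ, rfl⟩ := (emD hD).surjective x
  have he : (emD hD) ξ = Top D (-Complex.I) ξ := rfl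
  rw [he] at hx ⊢
  rw [U0_apply hD ξ] at hx
  have h2 : (2 * Complex.I) • (ξ : H) = 0 := by
    have := sub_eq_zero.mpr hx
    rw [Top_apply, Top_apply] at this
    rw [← this]
    module
  have h3 : (ξ : H) = 0 := by
    have h4 := smul_eq_zero.mp h2
    rcases h4 with h | h
    · exact absurd h (by simp [Complex.I_ne_zero])
    · exact h
  rw [Top_apply, h3]
  have : ξ = 0 := Subtype.ext h3
  rw [this]
  simp

section Backward

omit hD

variable (U : H →L[ℂ] H) (hU : U ∈ unitary (H →L[ℂ] H))
variable (hfix : ∀ x : H, U x = x → x = 0)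

/-- `U - 1` as a linear map. -/
def Vm : H →ₗ[ℂ] H := (U : H →ₗ[ℂ] H) - LinearMap.id

/-- `i (U + 1)` as a linear map. -/
def Vp : H →ₗ[ℂ] H := Complex.I • ((U : H →ₗ[ℂ] H) + LinearMap.id)

lemma Vm_apply (ν : H) : Vm U ν = U ν - ν := rfl

lemma Vp_apply (ν : H) : Vp U ν = Complex.I • (U ν + ν) := rfl

include hU

lemma star_apply_apply (x : H) : (star U) (U x) = x := by
  have := Unitary.star_mul_self_of_mem hU
  calc (star U) (U x) = (star U * U) x := rfl
  _ = x := by rw [this]; rfl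

lemma apply_star_apply (x : H) : U ((star U) x) = x := by
  have := Unitary.mul_star_self_of_mem hU
  calc U ((star U) x) = (U * star U) x := rfl
  _ = x := by rw [this]; rfl

include hfix

lemma Vm_injective : Function.Injective (Vm U) := by
  have : LinearMap.ker (Vm U) = ⊥ := by
    rw [LinearMap.ker_eq_bot']
    intro m hm
    rw [Vm_apply, sub_eq_zero] at hm
    exact hfix m hm
  exact LinearMap.ker_eq_bot.mp this

/-- The inverse Cayley transform `i (U + 1)(U - 1)⁻¹` as a `LinearPMap`. -/
def Dinv : H →ₗ.[ℂ] H :=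
  ⟨LinearMap.range (Vm U),
    (Vp U) ∘ₗ ((LinearEquiv.ofInjective (Vm U) (Vm_injective U hU hfix)).symm :
      LinearMap.range (Vm U) →ₗ[ℂ] H)⟩

lemma Dinv_domain : (Dinv U hU hfix).domain = LinearMap.range (Vm U) := rfl

lemma Dinv_apply (ν : H) (hν : Vm U ν ∈ (Dinv U hU hfix).domain) :
    Dinv U hU hfix ⟨Vm U ν, hν⟩ = Vp U ν := by
  have h1 : (LinearEquiv.ofInjective (Vm U) (Vm_injective U hU hfix)).symm
      ⟨Vm U ν, hν⟩ = ν := by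
    apply Vm_injective U hU hfix
    exact LinearEquiv.ofInjective_symm_apply (f := Vm U) (h := Vm_injective U hU hfix) (⟨Vm U ν, hν⟩ : LinearMap.range (Vm U))
  show Vp U ((LinearEquiv.ofInjective (Vm U) (Vm_injective U hU hfix)).symm ⟨Vm U ν, hν⟩) = _
  rw [h1]

include hU hfix

lemma Dinv_dense : Dense ((Dinv U hU hfix).domain : Set H) := by
  rw [Submodule.dense_iff_topologicalClosure_eq_top, Dinv_domain,
    ← Submodule.orthogonal_orthogonal_eq_closure]
  have horth : (LinearMap.range (Vm U))ᗮ = ⊥ := by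
    rw [Submodule.eq_bot_iff]
    intro x hx
    rw [Submodule.mem_orthogonal] at hx
    have key : ∀ ν : H, ⟪(ν : H), (star U) x - x⟫ = 0 := by
      intro ν
      have h0 : ⟪Vm U ν, x⟫ = 0 := hx _ (LinearMap.mem_range_self _ ν)
      rw [Vm_apply, inner_sub_left] at h0
      have hadj : ⟪(ν : H), (star U) x⟫ = ⟪U ν, x⟫ := by
        rw [ContinuousLinearMap.star_eq_adjoint, ContinuousLinearMap.adjoint_inner_right]
      rw [inner_sub_right, hadj]
      linear_combination h0
    have h1 : (star U) x - x = 0 := by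
      have := key ((star U) x - x)
      rwa [inner_self_eq_zero] at this
    have h2 : U x = x := by
      have h3 : (star U) x = x := by rwa [sub_eq_zero] at h1
      calc U x = U ((star U) x) := by rw [h3]
      _ = x := apply_star_apply U hU x
    exact hfix x h2
  rw [horth, Submodule.bot_orthogonal_eq_top]

lemma Dinv_apply' (x : (Dinv U hU hfix).domain) (ν : H) (hx : Vm U ν = (x : H)) :
    Dinv U hU hfix x = Vp U ν := by
  have h1 : x = ⟨Vm U ν, by rw [hx]; exact x.2⟩ := Subtype.ext hx.symm
  rw [h1, Dinv_apply]

lemma Dinv_symmetric : (Dinv U hU hfix).IsFormalAdjoint (Dinv U hU hfix) := by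
  intro x y
  obtain ⟨ν, hν⟩ := x.2
  obtain ⟨μ, hμ⟩ := y.2
  rw [Dinv_apply' U hU hfix x ν hν, Dinv_apply' U hU hfix y μ hμ, ← hν, ← hμ]
  have huni : ⟪U ν, U μ⟫ = ⟪(ν : H), μ⟫ :=
    ContinuousLinearMap.inner_map_map_of_mem_unitary hU ν μ
  simp only [Vp_apply, Vm_apply, inner_sub_left, inner_sub_right, inner_add_left,
    inner_add_right, inner_smul_left, inner_smul_right, Complex.conj_I]
  linear_combination (-2*Complex.I) * huni

lemma Dinv_adjoint_le : (Dinv U hU hfix)† ≤ Dinv U hU hfix := by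
  have hdense := Dinv_dense U hU hfix
  have main : ∀ x : (Dinv U hU hfix)†.domain,
      ∃ hmem : (x : H) ∈ (Dinv U hU hfix).domain,
        Dinv U hU hfix ⟨(x : H), hmem⟩ = (Dinv U hU hfix)† x := by
    intro x
    set y := (x : H) with hy_def
    set z := (Dinv U hU hfix)† x with hz_def
    have key : ∀ ν : H, ⟪z, Vm U ν⟫ = ⟪y, Vp U ν⟫ := by
      intro ν
      have h := LinearPMap.adjoint_isFormalAdjoint hdense x
        ⟨Vm U ν, LinearMap.mem_range_self _ ν⟩
      erw [Dinv_apply] at h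
      exact h
    have hw : star U z - z + Complex.I • ((star U) y) + Complex.I • y = 0 := by
      have hwν : ∀ ν : H,
          ⟪star U z - z + Complex.I • ((star U) y) + Complex.I • y, ν⟫ = 0 := by
        intro ν
        have h := key ν
        simp only [Vm_apply, Vp_apply, inner_sub_right, inner_add_right,
          inner_smul_right] at h
        simp only [inner_add_left, inner_sub_left, inner_smul_left, Complex.conj_I]
        have h1 : ⟪(star U) z, ν⟫ = ⟪z, U ν⟫ := by
          rw [ContinuousLinearMap.star_eq_adjoint, ContinuousLinearMap.adjoint_inner_left]
        have h2 : ⟪(star U) y, ν⟫ = ⟪y, U ν⟫ := by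
          rw [ContinuousLinearMap.star_eq_adjoint, ContinuousLinearMap.adjoint_inner_left]
        rw [h1, h2]
        linear_combination h
      have := hwν (star U z - z + Complex.I • ((star U) y) + Complex.I • y)
      rwa [inner_self_eq_zero] at this
    have h6 : z - U z + Complex.I • y + Complex.I • (U y) = 0 := by
      have h7 : U (star U z - z + Complex.I • ((star U) y) + Complex.I • y) = 0 := by
        rw [hw, _root_.map_zero]
      rw [_root_.map_add, _root_.map_add, _root_.map_sub, _root_.map_smul, _root_.map_smul,
        apply_star_apply U hU z, apply_star_apply U hU y] at h7
      linear_combination (norm := module) h7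
    have hUz : U z = z + Complex.I • y + Complex.I • (U y) := by
      linear_combination (norm := module) -h6
    have h2I : (2*Complex.I : ℂ) ≠ 0 := by simp [Complex.I_ne_zero]
    have hv : Vm U (z - Complex.I • y) = (2*Complex.I) • y := by
      rw [Vm_apply, _root_.map_sub, _root_.map_smul, hUz]
      module
    have hy : Vm U ((2*Complex.I)⁻¹ • (z - Complex.I • y)) = y := by
      rw [_root_.map_smul, hv, smul_smul, inv_mul_cancel₀ h2I, one_smul]
    have hUν : U (z - Complex.I • y) = z + Complex.I • y := by
      rw [_root_.map_sub, _root_.map_smul, hUz]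
      module
    have hz : Vp U ((2*Complex.I)⁻¹ • (z - Complex.I • y)) = z := by
      rw [Vp_apply, _root_.map_smul, hUν, ← smul_add]
      have hcomb : (z + Complex.I • y) + (z - Complex.I • y) = (2:ℂ) • z := by module
      rw [hcomb, smul_smul, smul_smul]
      have hs : Complex.I * (2*Complex.I)⁻¹ * 2 = 1 := by
        field_simp
      rw [hs, one_smul]
    refine ⟨⟨(2*Complex.I)⁻¹ • (z - Complex.I • y), hy⟩, ?_⟩
    rw [Dinv_apply' U hU hfix _ ((2*Complex.I)⁻¹ • (z - Complex.I • y)) hy]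
    exact hz
  constructor
  · intro a ha
    exact (main ⟨a, ha⟩).1
  · intro a b hab
    obtain ⟨hm, hv⟩ := main a
    rw [← hv]
    exact congrArg _ (Subtype.ext hab.symm) |>.symm

lemma Dinv_isSelfAdjoint : IsSelfAdjoint (Dinv U hU hfix) := by
  rw [LinearPMap.isSelfAdjoint_def]
  exact le_antisymm (Dinv_adjoint_le U hU hfix)
    ((Dinv_symmetric U hU hfix).le_adjoint (Dinv_dense U hU hfix))

end Backward

section RoundTrip

lemma VmUu (ξ : D.domain) :
    Vm (Uu hD : H →L[ℂ] H) (Top D (-Complex.I) ξ) = (2*Complex.I) • (ξ : H) := by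
  rw [Vm_apply, Uu_apply hD ξ, Top_apply, Top_apply]
  module

lemma VpUu (ξ : D.domain) :
    Vp (Uu hD : H →L[ℂ] H) (Top D (-Complex.I) ξ) = (2*Complex.I) • (D ξ) := by
  rw [Vp_apply, Uu_apply hD ξ, Top_apply, Top_apply]
  module

lemma Top_surj' (ν : H) : ∃ ξ : D.domain, Top D (-Complex.I) ξ = ν := by
  have := Top_surjective hD (-Complex.I) (Or.inr rfl)
  exact LinearMap.range_eq_top.mp this ν

lemma cayley_left_inv (hU : (Uu hD : H →L[ℂ] H) ∈ unitary (H →L[ℂ] H))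
    (hfix : ∀ x : H, (Uu hD : H →L[ℂ] H) x = x → x = 0) :
    Dinv (Uu hD : H →L[ℂ] H) hU hfix = D := by
  have h2I : (2*Complex.I : ℂ) ≠ 0 := by simp [Complex.I_ne_zero]
  apply LinearPMap.ext
  · apply le_antisymm
    · rintro x ⟨ν, hν⟩
      obtain ⟨ξ, rfl⟩ := Top_surj' hD ν
      rw [VmUu hD ξ] at hν
      rw [← hν]
      exact Submodule.smul_mem _ _ ξ.2
    · intro x hx
      refine ⟨Top D (-Complex.I) ((2*Complex.I)⁻¹ • ⟨x, hx⟩), ?_⟩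
      rw [VmUu hD, Submodule.coe_smul, smul_smul, mul_inv_cancel₀ h2I, one_smul]
  · suffices hs : ∀ (a : (Dinv (Uu hD : H →L[ℂ] H) hU hfix).domain) (b : D.domain),
        (a : H) = b → Dinv (Uu hD : H →L[ℂ] H) hU hfix a = D b from
      fun x hf hg => hs ⟨x, hf⟩ ⟨x, hg⟩ rfl
    intro a b hab
    obtain ⟨ν, hν⟩ := a.2
    obtain ⟨ξ, rfl⟩ := Top_surj' hD ν
    rw [Dinv_apply' _ hU hfix a (Top D (-Complex.I) ξ) hν, VpUu hD]
    have hb : b = (2*Complex.I) • ξ := by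
      apply Subtype.ext
      rw [← hab, ← hν, VmUu hD]
      rfl
    rw [hb, LinearPMap.map_smul]

variable (U : H →L[ℂ] H) (hUm : U ∈ unitary (H →L[ℂ] H))
    (hfixm : ∀ x : H, U x = x → x = 0)

omit hD in
lemma cayley_right_inv (hsa : IsSelfAdjoint (Dinv U hUm hfixm)) :
    ((Uu hsa : H →L[ℂ] H)) = U := by
  have h2I : (2*Complex.I : ℂ) ≠ 0 := by simp [Complex.I_ne_zero]
  set DD := Dinv U hUm hfixm with hDD
  have key : ∀ ν : H,
      (Uu hsa : H →L[ℂ] H) ((2*Complex.I) • ν) = U ((2*Complex.I) • ν) := by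
    intro ν
    have hmem : Vm U ν ∈ DD.domain := LinearMap.mem_range_self _ ν
    set xv : DD.domain := ⟨Vm U ν, hmem⟩ with hxv
    have hvapp : DD xv = Vp U ν := Dinv_apply' U hUm hfixm xv ν rfl
    have hm : Top DD (-Complex.I) xv = (2*Complex.I) • ν := by
      rw [Top_apply, hvapp]
      show Complex.I • (U ν + ν) + (-Complex.I) • (U ν - ν) = _
      module
    have hp : Top DD Complex.I xv = (2*Complex.I) • (U ν) := by
      rw [Top_apply, hvapp]
      show Complex.I • (U ν + ν) + Complex.I • (U ν - ν) = _
      module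
    calc (Uu hsa : H →L[ℂ] H) ((2*Complex.I) • ν)
        = (Uu hsa : H →L[ℂ] H) (Top DD (-Complex.I) xv) := by rw [hm]
      _ = Top DD Complex.I xv := Uu_apply hsa xv
      _ = (2*Complex.I) • (U ν) := hp
      _ = U ((2*Complex.I) • ν) := by rw [_root_.map_smul]
  ext w
  have := key ((2*Complex.I)⁻¹ • w)
  rwa [smul_smul, mul_inv_cancel₀ h2I, one_smul] at this

end RoundTrip

end Cayley

end CayleyAux

theorem stmt5 {H : Type*} [NormedAddCommGroup H] [InnerProductSpace ℂ H] [CompleteSpace H] :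
    ∃ e : {D : H →ₗ.[ℂ] H // Dense (D.domain : Set H) ∧ IsSelfAdjoint D} ≃
          {U : H →L[ℂ] H // U ∈ unitary (H →L[ℂ] H) ∧ ∀ x : H, U x = x → x = 0},
      (∀ (D : {D : H →ₗ.[ℂ] H // Dense (D.domain : Set H) ∧ IsSelfAdjoint D})
          (ξ : D.1.domain),
          (e D).1 (D.1 ξ - Complex.I • (ξ : H)) = D.1 ξ + Complex.I • (ξ : H)) ∧
      (∀ (U : {U : H →L[ℂ] H // U ∈ unitary (H →L[ℂ] H) ∧ ∀ x : H, U x = x → x = 0})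
          (ν : H),
          ∃ hν : U.1 ν - ν ∈ (e.symm U).1.domain,
            (e.symm U).1 ⟨U.1 ν - ν, hν⟩ = Complex.I • (U.1 ν + ν)) := by
  refine ⟨⟨fun Ds => ⟨(Cayley.Uu Ds.2.2 : H →L[ℂ] H), (Cayley.Uu Ds.2.2).property,
      fun x hx => Cayley.Uu_fixed Ds.2.2 x hx⟩,
    fun Us => ⟨Cayley.Dinv Us.1 Us.2.1 Us.2.2,
      Cayley.Dinv_dense Us.1 Us.2.1 Us.2.2,
      Cayley.Dinv_isSelfAdjoint Us.1 Us.2.1 Us.2.2⟩,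
    fun Ds => Subtype.ext (Cayley.cayley_left_inv Ds.2.2 (Cayley.Uu Ds.2.2).property (fun x hx => Cayley.Uu_fixed Ds.2.2 x hx)),
    fun Us => Subtype.ext (Cayley.cayley_right_inv Us.1 Us.2.1 Us.2.2 (Cayley.Dinv_isSelfAdjoint Us.1 Us.2.1 Us.2.2))⟩, ?_, ?_⟩
  · intro Ds ξ
    have h1 : Ds.1 ξ - Complex.I • (ξ : H) = Cayley.Top Ds.1 (-Complex.I) ξ := by
      rw [Cayley.Top_apply]
      module
    have h2 : Cayley.Top Ds.1 Complex.I ξ = Ds.1 ξ + Complex.I • (ξ : H) :=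
      Cayley.Top_apply Ds.1 Complex.I ξ
    rw [h1, ← h2]
    exact Cayley.Uu_apply Ds.2.2 ξ
  · intro Us ν
    refine ⟨⟨ν, rfl⟩, ?_⟩
    have := Cayley.Dinv_apply' Us.1 Us.2.1 Us.2.2 ⟨Us.1 ν - ν, ⟨ν, rfl⟩⟩ ν rfl
    simpa [Cayley.Vp_apply] using this
end

section
/- Let D be an essentially self-adjoint unbounded operator on a Hilbert space H and T a bounded operator that preserves dom D and satisfies TD = −DT on dom D. Then for every odd bounded continuous function f : ℝ → ℂ we have T f(D) = −f(D) T, and for every even bounded continuous function f we have T f(D) = f(D) T. -/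
open scoped InnerProductSpace
open BoundedContinuousFunction

noncomputable section Stmt6Aux

def stmt6.negMap : C(ℝ, ℝ) := ⟨fun x => -x, continuous_neg⟩

def stmt6.nflip (f : BoundedContinuousFunction ℝ ℂ) : BoundedContinuousFunction ℝ ℂ :=
  f.compContinuous stmt6.negMap

namespace stmt6

@[simp] lemma nflip_apply (f : BoundedContinuousFunction ℝ ℂ) (x : ℝ) :
    nflip f x = f (-x) := rfl

lemma denom_ne (x : ℝ) : Complex.I + (x : ℂ) ≠ 0 := by
  intro h
  have := congrArg Complex.im h
  simp at this

lemma denom_ne' (x : ℝ) : (x : ℂ) - Complex.I ≠ 0 := by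
  intro h
  have := congrArg Complex.im h
  simp at this

lemma psi_cont : Continuous fun x : ℝ => (Complex.I + (x : ℂ))⁻¹ :=
  (continuous_const.add Complex.continuous_ofReal).inv₀ denom_ne

lemma psi_bound (x : ℝ) : ‖(Complex.I + (x : ℂ))⁻¹‖ ≤ 1 := by
  rw [norm_inv]
  have h1 : (1:ℝ) ≤ ‖Complex.I + (x:ℂ)‖ := by
    calc (1:ℝ) = |(Complex.I + (x:ℂ)).im| := by simp
    _ ≤ ‖Complex.I + (x:ℂ)‖ := Complex.abs_im_le_norm _
    _ = ‖Complex.I + (x:ℂ)‖ := rfl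
  exact inv_le_one_of_one_le₀ h1

def psiF : BoundedContinuousFunction ℝ ℂ :=
  .ofNormedAddCommGroup _ psi_cont 1 psi_bound

@[simp] lemma psiF_apply (x : ℝ) : psiF x = (Complex.I + (x : ℂ))⁻¹ := rfl

@[simp] lemma star_psiF_apply (x : ℝ) : (star psiF) x = ((x : ℂ) - Complex.I)⁻¹ := by
  show (starRingEnd ℂ) (psiF x) = _
  rw [psiF_apply, map_inv₀]
  congr 1
  simp [Complex.ext_iff]

lemma nflip_psiF : nflip psiF = -(star psiF) := by
  ext x
  rw [nflip_apply, BoundedContinuousFunction.coe_neg]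
  simp only [Pi.neg_apply, star_psiF_apply, psiF_apply]
  rw [← inv_neg]
  push_cast
  ring_nf

lemma aux_eq (x : ℝ) : ((x:ℂ) - Complex.I)⁻¹ =
    (Complex.I + ↑x)⁻¹ + 2 * Complex.I * ((Complex.I + ↑x)⁻¹ * ((x:ℂ) - Complex.I)⁻¹) := by
  have h1 : (x:ℂ) + Complex.I ≠ 0 := by simpa [add_comm] using denom_ne x
  have h2 := denom_ne' x
  rw [add_comm Complex.I (x:ℂ), inv_eq_iff_eq_inv]
  field_simp
  rw [eq_div_iff (show (x:ℂ) - Complex.I + Complex.I * 2 ≠ 0 by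
    rw [show (x:ℂ) - Complex.I + Complex.I * 2 = (x:ℂ) + Complex.I by ring]; exact h1)]
  ring

lemma star_psiF_eq : star psiF = psiF + (2 * Complex.I) • (psiF * star psiF) := by
  ext x
  simp only [star_psiF_apply, BoundedContinuousFunction.coe_add, Pi.add_apply,
    BoundedContinuousFunction.coe_smul, Pi.smul_apply, BoundedContinuousFunction.coe_mul,
    Pi.mul_apply, psiF_apply, smul_eq_mul]
  exact aux_eq x


lemma nflip_add (f g : BoundedContinuousFunction ℝ ℂ) :
    nflip (f + g) = nflip f + nflip g := by ext x; simp [nflip]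

lemma nflip_mul (f g : BoundedContinuousFunction ℝ ℂ) :
    nflip (f * g) = nflip f * nflip g := by ext x; simp [nflip]

lemma nflip_smul (c : ℂ) (f : BoundedContinuousFunction ℝ ℂ) :
    nflip (c • f) = c • nflip f := by ext x; simp [nflip]

lemma nflip_one : nflip 1 = 1 := by ext x; simp [nflip]

lemma nflip_star (f : BoundedContinuousFunction ℝ ℂ) :
    nflip (star f) = star (nflip f) := by ext x; simp [nflip]

lemma nflip_norm_le (f : BoundedContinuousFunction ℝ ℂ) (C : ℝ) (h : ‖f‖ ≤ C) :
    ‖nflip f‖ ≤ C :=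
  le_trans (f.norm_compContinuous_le _) h

lemma psiF_zero_at_infty : Filter.Tendsto psiF (Filter.cocompact ℝ) (nhds 0) := by
  have h1 : Filter.Tendsto (fun x : ℝ => |x|) (Filter.cocompact ℝ) Filter.atTop := by
    exact Filter.Tendsto.congr (fun x => Real.norm_eq_abs x) (tendsto_norm_cocompact_atTop (E := ℝ))
  apply squeeze_zero_norm' ?_ h1.inv_tendsto_atTop
  filter_upwards [h1.eventually_ge_atTop 1] with x hx
  rw [psiF_apply, norm_inv]
  apply inv_anti₀ (lt_of_lt_of_le one_pos hx)
  calc |x| = |(Complex.I + (x:ℂ)).re| := by simp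
  _ ≤ ‖Complex.I + (x:ℂ)‖ := Complex.abs_re_le_norm _
  _ = ‖Complex.I + (x:ℂ)‖ := rfl

/-- extension to the one-point compactification -/
def ext0 (g : BoundedContinuousFunction ℝ ℂ)
    (hg : Filter.Tendsto g (Filter.cocompact ℝ) (nhds 0)) : C(OnePoint ℝ, ℂ) :=
  ⟨fun p => p.elim 0 g, by
    rw [OnePoint.continuous_iff]
    refine ⟨?_, g.continuous⟩
    simp only [OnePoint.elim_infty]
    rw [Filter.coclosedCompact_eq_cocompact]
    exact hg⟩

@[simp] lemma ext0_coe (g hg) (x : ℝ) : ext0 g hg (x : OnePoint ℝ) = g x := rfl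
@[simp] lemma ext0_infty (g hg) : ext0 g hg (OnePoint.infty : OnePoint ℝ) = 0 := rfl

/-- restriction back to ℝ -/
def restr (F : C(OnePoint ℝ, ℂ)) : BoundedContinuousFunction ℝ ℂ :=
  (mkOfCompact F).compContinuous ⟨fun x => (x : OnePoint ℝ), OnePoint.continuous_coe⟩

@[simp] lemma restr_apply (F : C(OnePoint ℝ, ℂ)) (x : ℝ) : restr F (x : ℝ) = F x := rfl


/-- the cutoff functions -/
def cutoff (n : ℕ) : BoundedContinuousFunction ℝ ℂ :=
  .ofNormedAddCommGroup (fun x : ℝ => (((1 + (x / (n + 1)) ^ 2)⁻¹ : ℝ) : ℂ))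
    (Complex.continuous_ofReal.comp <| (continuous_const.add
      ((continuous_id.div_const _).pow 2)).inv₀ fun x => (by positivity : (0:ℝ) < 1 + (x / (n + 1)) ^ 2).ne') 1
    (fun x => by
      rw [Complex.norm_real, Real.norm_eq_abs, abs_of_pos (by positivity)]
      rw [inv_le_one_iff₀]
      right; nlinarith [sq_nonneg (x / (n+1))])

lemma cutoff_denom_pos (n : ℕ) (x : ℝ) : (0:ℝ) < 1 + (x / (n + 1)) ^ 2 := by positivity

@[simp] lemma cutoff_apply (n : ℕ) (x : ℝ) :
    cutoff n x = (((1 + (x / (n + 1)) ^ 2)⁻¹ : ℝ) : ℂ) := rfl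

lemma cutoff_zero_at_infty (n : ℕ) :
    Filter.Tendsto (cutoff n) (Filter.cocompact ℝ) (nhds 0) := by
  have h1 : Filter.Tendsto (fun x : ℝ => 1 + (x / (n + 1)) ^ 2) (Filter.cocompact ℝ)
      Filter.atTop := by
    have hn : Filter.Tendsto (fun x : ℝ => |x|) (Filter.cocompact ℝ) Filter.atTop := by
      exact Filter.Tendsto.congr (fun x => Real.norm_eq_abs x) (tendsto_norm_cocompact_atTop (E := ℝ))
    apply Filter.tendsto_atTop_add_const_left
    have hd : Filter.Tendsto (fun x : ℝ => |x| / (n + 1)) (Filter.cocompact ℝ) Filter.atTop :=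
      hn.atTop_div_const (by positivity)
    have := (Filter.tendsto_pow_atTop (two_ne_zero)).comp hd
    refine this.congr fun x => ?_
    show (|x| / (n + 1)) ^ 2 = _
    rw [div_pow, sq_abs, div_pow]
  have h2 := h1.inv_tendsto_atTop
  have h3 : Filter.Tendsto (fun x : ℝ => cutoff n x) (Filter.cocompact ℝ)
      (nhds ((0:ℝ):ℂ)) := (Complex.continuous_ofReal.tendsto 0).comp h2
  rw [Complex.ofReal_zero] at h3
  exact h3

lemma cutoff_tendsto_one (x : ℝ) :
    Filter.Tendsto (fun n : ℕ => cutoff n x) Filter.atTop (nhds 1) := by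
  have h0 : Filter.Tendsto (fun n : ℕ => x / (n + 1)) Filter.atTop (nhds 0) := by
    apply Filter.Tendsto.div_atTop (tendsto_const_nhds)
    exact Filter.tendsto_atTop_add_const_right Filter.atTop 1 tendsto_natCast_atTop_atTop
  have h1 : Filter.Tendsto (fun n : ℕ => ((1 + (x / (n + 1)) ^ 2)⁻¹ : ℝ)) Filter.atTop
      (nhds 1) := by
    have hc : Continuous fun t : ℝ => ((1 + t ^ 2)⁻¹ : ℝ) :=
      (continuous_const.add (continuous_id.pow 2)).inv₀ fun t => (by positivity : (0:ℝ) < 1 + t ^ 2).ne'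
    have := (hc.tendsto 0).comp h0
    simpa [Function.comp_def] using this
  have h2 : Filter.Tendsto (fun n : ℕ => cutoff n x) Filter.atTop (nhds ((1:ℝ):ℂ)) :=
    (Complex.continuous_ofReal.tendsto 1).comp h1
  rw [Complex.ofReal_one] at h2
  exact h2


lemma engine (B : Set (BoundedContinuousFunction ℝ ℂ))
    (hone : (1 : BoundedContinuousFunction ℝ ℂ) ∈ B)
    (hadd : ∀ f g, f ∈ B → g ∈ B → f + g ∈ B)
    (hmul : ∀ f g, f ∈ B → g ∈ B → f * g ∈ B)
    (hsmul : ∀ (c : ℂ) (f), f ∈ B → c • f ∈ B)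
    (hstar : ∀ f, f ∈ B → star f ∈ B)
    (hpsi : psiF ∈ B)
    (hlim : ∀ (u : ℕ → BoundedContinuousFunction ℝ ℂ) (g : BoundedContinuousFunction ℝ ℂ)
      (C : ℝ), (∀ n, ‖u n‖ ≤ C) →
      (∀ x, Filter.Tendsto (fun n => u n x) Filter.atTop (nhds (g x))) →
      (∀ n, u n ∈ B) → g ∈ B) :
    ∀ f, f ∈ B := by
  -- B is closed under uniform limits
  have hnorm : ∀ g : BoundedContinuousFunction ℝ ℂ,
      (∀ ε > (0:ℝ), ∃ h ∈ B, dist h g < ε) → g ∈ B := by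
    intro g hg
    have hc : ∀ n : ℕ, ∃ h ∈ B, dist h g < 1 / (n + 1) := fun n => hg _ (by positivity)
    choose u hu hd using hc
    apply hlim u g (‖g‖ + 1) ?_ ?_ hu
    · intro n
      have h1 : ‖u n‖ - ‖g‖ ≤ ‖u n - g‖ := norm_sub_norm_le _ _
      have h2 : ‖u n - g‖ < 1 / (n + 1) := by rw [← dist_eq_norm]; exact hd n
      have h3 : (1:ℝ) / (n+1) ≤ 1 := by
        rw [div_le_one (by positivity)]; simp
      linarith
    · intro x
      rw [tendsto_iff_dist_tendsto_zero]
      apply squeeze_zero (fun n => dist_nonneg)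
        (fun n => le_of_lt (lt_of_le_of_lt ?_ (hd n)))
        tendsto_one_div_add_atTop_nhds_zero_nat
      exact BoundedContinuousFunction.dist_coe_le_dist x
  -- B contains all functions vanishing at infinity
  have hC0 : ∀ g : BoundedContinuousFunction ℝ ℂ,
      Filter.Tendsto g (Filter.cocompact ℝ) (nhds 0) → g ∈ B := by
    intro g hg
    set Ψ : C(OnePoint ℝ, ℂ) := ext0 psiF psiF_zero_at_infty with hΨ
    set A0 := StarAlgebra.adjoin ℂ ({Ψ} : Set C(OnePoint ℝ, ℂ)) with hA0
    have hSW : A0.topologicalClosure = ⊤ := by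
      apply ContinuousMap.starSubalgebra_topologicalClosure_eq_top_of_separatesPoints
      intro p q hpq
      refine ⟨⇑Ψ, Set.mem_image_of_mem _ (StarAlgebra.subset_adjoin ℂ _ rfl), ?_⟩
      have hψne : ∀ x : ℝ, psiF x ≠ 0 := fun x => inv_ne_zero (denom_ne x)
      induction p using OnePoint.rec with
      | infty =>
        induction q using OnePoint.rec with
        | infty => exact absurd rfl hpq
        | coe y => simpa [hΨ] using (hψne y).symm
      | coe x =>
        induction q using OnePoint.rec with
        | infty => simpa [hΨ] using hψne x
        | coe y =>
          simp only [hΨ, ext0_coe, psiF_apply]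
          intro h
          apply hpq
          rw [inv_inj, add_right_inj, Complex.ofReal_inj] at h
          rw [h]
    have hmemc : ext0 g hg ∈ closure (A0 : Set C(OnePoint ℝ, ℂ)) := by
      have h1 : ext0 g hg ∈ (A0.topologicalClosure : Set C(OnePoint ℝ, ℂ)) := by
        rw [hSW]; trivial
      rwa [StarSubalgebra.topologicalClosure_coe] at h1
    apply hnorm
    intro ε hε
    obtain ⟨b, hbA, hbd⟩ := Metric.mem_closure_iff.1 hmemc ε hε
    refine ⟨restr b, ?_, ?_⟩
    · clear hbd
      induction hbA using StarAlgebra.adjoin_induction with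
      | mem F hF =>
        have : F = Ψ := hF
        have hre : restr F = psiF := by
          subst this; ext x; simp [restr, hΨ]
        rw [hre]; exact hpsi
      | algebraMap r =>
        have hre : restr (algebraMap ℂ C(OnePoint ℝ, ℂ) r) = r • 1 := by
          ext x
          simp [restr, Algebra.algebraMap_eq_smul_one]
        rw [hre]; exact hsmul r 1 hone
      | add F G hF hG ihF ihG =>
        have hre : restr (F + G) = restr F + restr G := by ext x; simp [restr]
        rw [hre]; exact hadd _ _ ihF ihG
      | mul F G hF hG ihF ihG =>
        have hre : restr (F * G) = restr F * restr G := by ext x; simp [restr]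
        rw [hre]; exact hmul _ _ ihF ihG
      | star F hF ihF =>
        have hre : restr (star F) = star (restr F) := by ext x; simp [restr]
        rw [hre]; exact hstar _ ihF
    · have : dist (restr b) g ≤ dist (ext0 g hg) b := by
        rw [BoundedContinuousFunction.dist_le dist_nonneg]
        intro x
        have h1 : dist (restr b x) (g x) = dist ((ext0 g hg) (x : OnePoint ℝ)) (b (x : OnePoint ℝ)) := by
          rw [restr_apply, ext0_coe, dist_comm]
        rw [h1]
        exact ContinuousMap.dist_apply_le_dist _
      exact lt_of_le_of_lt this hbd
  -- conclude via cutoffs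
  intro f
  apply hlim (fun n => f * cutoff n) f ‖f‖
  · intro n
    calc ‖f * cutoff n‖ ≤ ‖f‖ * ‖cutoff n‖ := norm_mul_le _ _
    _ ≤ ‖f‖ * 1 := by
        apply mul_le_mul_of_nonneg_left ?_ (norm_nonneg f)
        exact BoundedContinuousFunction.norm_ofNormedAddCommGroup_le _ zero_le_one _
    _ = ‖f‖ := mul_one _
  · intro x
    have := (tendsto_const_nhds (x := f x) (f := Filter.atTop (α := ℕ))).mul
      (cutoff_tendsto_one x)
    simpa using this
  · intro n
    apply hC0
    have h0 := (cutoff_zero_at_infty n).norm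
    simp only [norm_zero] at h0
    apply squeeze_zero_norm ?_ (by simpa using h0.const_mul ‖f‖ :
      Filter.Tendsto (fun x => ‖f‖ * ‖cutoff n x‖) (Filter.cocompact ℝ) (nhds 0))
    intro x
    rw [BoundedContinuousFunction.coe_mul]
    simp only [Pi.mul_apply, norm_mul]
    exact mul_le_mul_of_nonneg_right (f.norm_coe_le_norm x) (norm_nonneg _)


open LinearPMap in
lemma dense_range_aux {H : Type*} [NormedAddCommGroup H] [InnerProductSpace ℂ H]
    [CompleteSpace H] (D : H →ₗ.[ℂ] H)
    (hclosable : D.IsClosable) (hsa : IsSelfAdjoint D.closure)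
    (c : ℂ) (hc : c = Complex.I ∨ c = -Complex.I) :
    Dense (Set.range (fun ξ : D.domain => D ξ + c • (ξ:H))) := by
  set L : D.domain →ₗ[ℂ] H := D.toFun + c • D.domain.subtype with hL
  have hrange : Set.range (fun ξ : D.domain => D ξ + c • (ξ:H)) =
      (LinearMap.range L : Set H) := by
    ext y
    simp only [Set.mem_range, SetLike.mem_coe, LinearMap.mem_range]
    rfl
  rw [hrange]
  rw [Submodule.dense_iff_topologicalClosure_eq_top,
    Submodule.topologicalClosure_eq_top_iff, Submodule.eq_bot_iff]
  intro η hη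
  have h0 : ∀ ξ : D.domain, ⟪(η:H), D ξ + c • (ξ:H)⟫_ℂ = 0 := by
    intro ξ
    rw [← inner_eq_zero_symm]
    exact (Submodule.mem_orthogonal _ η).1 hη _ (LinearMap.mem_range.2 ⟨ξ, rfl⟩)
  have hinner : ∀ ξ : D.domain,
      ⟪η, (D ξ : H)⟫_ℂ = ⟪(-(starRingEnd ℂ) c) • η, (ξ:H)⟫_ℂ := by
    intro ξ
    have := h0 ξ
    rw [inner_add_right, inner_smul_right] at this
    rw [inner_smul_left]
    simp only [_root_.map_neg, Complex.conj_conj]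
    linear_combination this
  have hinner' : ∀ ξ : D.closure.domain,
      ⟪η, D.closure ξ⟫_ℂ = ⟪(-(starRingEnd ℂ) c) • η, (ξ:H)⟫_ℂ := by
    intro ξ
    set Z : Set (H × H) := {p | ⟪η, p.2⟫_ℂ = ⟪(-(starRingEnd ℂ) c) • η, p.1⟫_ℂ} with hZdef
    have hZ : IsClosed Z :=
      isClosed_eq (Continuous.inner continuous_const continuous_snd)
        (Continuous.inner continuous_const continuous_fst)
    have hsub : (D.graph : Set (H × H)) ⊆ Z := by
      rintro p hp
      obtain ⟨ζ, hζ1, hζ2⟩ := D.mem_graph_iff.1 hp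
      simp only [hZdef, Set.mem_setOf_eq]
      rw [← hζ1, ← hζ2]
      exact hinner ζ
    have hmemg : ((ξ : H), D.closure ξ) ∈ closure (D.graph : Set (H × H)) := by
      have h1 : ((ξ : H), D.closure ξ) ∈ D.closure.graph := D.closure.mem_graph ξ
      rw [← hclosable.graph_closure_eq_closure_graph] at h1
      have h2 : ((ξ : H), D.closure ξ) ∈ (D.graph.topologicalClosure : Set (H × H)) := h1
      rwa [Submodule.topologicalClosure_coe] at h2
    exact (hZ.closure_subset_iff.2 hsub) hmemg
  have hdc : Dense (D.closure.domain : Set H) := hsa.dense_domain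
  have hmem : η ∈ (D.closure†).domain :=
    mem_adjoint_domain_of_exists _ ⟨(-(starRingEnd ℂ) c) • η, fun ξ => (hinner' ξ).symm⟩
  have hval : D.closure† ⟨η, hmem⟩ = (-(starRingEnd ℂ) c) • η :=
    adjoint_apply_eq hdc _ (fun ξ => (hinner' ξ).symm)
  have hsa' : D.closure† = D.closure := hsa
  obtain ⟨hdomeq, hfun⟩ := LinearPMap.ext_iff.1 hsa'
  have hmem' : η ∈ D.closure.domain := hdomeq ▸ hmem
  have hval' : D.closure ⟨η, hmem'⟩ = (-(starRingEnd ℂ) c) • η := by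
    rw [← hfun (x := η) (hf := hmem) (hg := hmem')]
    exact hval
  have hfin := hinner' ⟨η, hmem'⟩
  rw [hval'] at hfin
  rw [inner_smul_right, inner_smul_left] at hfin
  simp only [_root_.map_neg, Complex.conj_conj] at hfin
  have hcc : c ≠ (starRingEnd ℂ) c := by
    rcases hc with h | h <;> subst h <;> simp [Complex.ext_iff] <;> norm_num
  have hz : ⟪η, η⟫_ℂ = 0 := by
    by_contra hne
    apply hcc
    have h2 : (-(starRingEnd ℂ) c) = -c := mul_right_cancel₀ hne hfin
    have h3 := neg_injective h2
    rw [h3]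
  simpa using inner_self_eq_zero.1 hz
end stmt6
end Stmt6Aux
open scoped InnerProductSpace

theorem stmt6 {H : Type*} [NormedAddCommGroup H] [InnerProductSpace ℂ H] [CompleteSpace H]
    (D : H →ₗ.[ℂ] H) (hdense : Dense (D.domain : Set H))
    (hsym : ∀ ξ η : D.domain, ⟪D ξ, (η : H)⟫_ℂ = ⟪(ξ : H), D η⟫_ℂ)
    (hclosable : D.IsClosable) (hsa : IsSelfAdjoint D.closure)
    (Φ : BoundedContinuousFunction ℝ ℂ →⋆ₐ[ℂ] (H →L[ℂ] H))
    (hΦres : ∀ ψ : BoundedContinuousFunction ℝ ℂ, (∀ x : ℝ, ψ x = (Complex.I + x)⁻¹) →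
      ∀ ξ : D.closure.domain, Φ ψ (D.closure ξ + Complex.I • (ξ : H)) = ξ)
    (hΦcont : ∀ (f : ℕ → BoundedContinuousFunction ℝ ℂ) (g : BoundedContinuousFunction ℝ ℂ)
      (C : ℝ), (∀ n, ‖f n‖ ≤ C) →
      (∀ x : ℝ, Filter.Tendsto (fun n => f n x) Filter.atTop (nhds (g x))) →
      ∀ ξ : H, Filter.Tendsto (fun n => Φ (f n) ξ) Filter.atTop (nhds (Φ g ξ)))
    (T : H →L[ℂ] H) (hTdom : ∀ ξ : D.domain, (T ξ : H) ∈ D.domain)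
    (hanti : ∀ ξ : D.domain, T (D ξ) = - D ⟨T ξ, hTdom ξ⟩)
    (f : BoundedContinuousFunction ℝ ℂ) :
    ((∀ x : ℝ, f (-x) = - f x) → T ∘L Φ f = - (Φ f ∘L T)) ∧
    ((∀ x : ℝ, f (-x) = f x) → T ∘L Φ f = Φ f ∘L T) := by
  classical
  set ψ := stmt6.psiF with hψdef
  set R := Φ ψ with hRdef
  set S := Φ (star ψ) with hSdef
  have hres : ∀ ξ : D.closure.domain, R (D.closure ξ + Complex.I • (ξ:H)) = ξ :=
    hΦres ψ (fun x => rfl)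
  have hid : S = R + (2*Complex.I) • (R * S) := by
    conv_lhs => rw [hSdef, stmt6.star_psiF_eq]
    rw [map_add, map_smul, map_mul]
  have hcomm : S * R = R * S := by
    rw [hRdef, hSdef, ← map_mul, ← map_mul, mul_comm]
  have hid' : R = S - (2*Complex.I) • (R * S) := by
    rw [eq_sub_iff_add_eq]
    exact hid.symm
  -- S is the resolvent at -I
  have hres' : ∀ ζ : D.closure.domain, S (D.closure ζ + (-Complex.I) • (ζ:H)) = ζ := by
    intro ζ
    set η := D.closure ζ + Complex.I • (ζ:H) with hηdef
    have hv : D.closure ζ + (-Complex.I) • (ζ:H) = η - (2*Complex.I) • R η := by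
      rw [hres ζ]
      rw [hηdef]
      module
    have h2 : S (R η) = R (S η) := by
      have := congrArg (fun A : H →L[ℂ] H => A η) hcomm
      simpa only [ContinuousLinearMap.mul_apply] using this
    have h3 : R η = S η - (2*Complex.I) • R (S η) := by
      have := congrArg (fun A : H →L[ℂ] H => A η) hid'
      simpa only [ContinuousLinearMap.sub_apply, ContinuousLinearMap.smul_apply,
        ContinuousLinearMap.mul_apply] using this
    calc S (D.closure ζ + (-Complex.I) • (ζ:H))
        = S (η - (2*Complex.I) • R η) := by rw [hv]
      _ = S η - (2*Complex.I) • S (R η) := by rw [map_sub, map_smul]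
      _ = S η - (2*Complex.I) • R (S η) := by rw [h2]
      _ = R η := h3.symm
      _ = ζ := hres ζ
  -- lifting the domain
  have hmemc : ∀ ξ : D.domain, (ξ:H) ∈ D.closure.domain := fun ξ => D.le_closure.1 ξ.2
  have hDc : ∀ ξ : D.domain, D.closure ⟨(ξ:H), hmemc ξ⟩ = D ξ :=
    fun ξ => (D.le_closure.2 rfl).symm
  -- base commutation relations
  have hTR : T * R = -(S * T) := by
    have hdense1 := stmt6.dense_range_aux D hclosable hsa Complex.I (Or.inl rfl)
    apply ContinuousLinearMap.ext_on (hdense1.mono Submodule.subset_span)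
    rintro _ ⟨ξ, rfl⟩
    simp only [ContinuousLinearMap.mul_apply, ContinuousLinearMap.neg_apply]
    have e1 : R (D ξ + Complex.I • (ξ:H)) = ξ := by
      have := hres ⟨(ξ:H), hmemc ξ⟩
      rwa [hDc ξ] at this
    rw [e1]
    set ζ : D.domain := ⟨T ξ, hTdom ξ⟩ with hζdef
    have e2 : T (D ξ + Complex.I • (ξ:H)) =
        -(D.closure ⟨(ζ:H), hmemc ζ⟩ + (-Complex.I) • (ζ:H)) := by
      rw [map_add, map_smul, hanti ξ, hDc ζ]
      show -(D ζ) + Complex.I • (T ξ) = _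
      have : (ζ:H) = T ξ := rfl
      rw [this]
      module
    rw [e2, map_neg, hres' ⟨(ζ:H), hmemc ζ⟩]
    simp
    rfl
  have hTS : T * S = -(R * T) := by
    have hdense1 := stmt6.dense_range_aux D hclosable hsa (-Complex.I) (Or.inr rfl)
    apply ContinuousLinearMap.ext_on (hdense1.mono Submodule.subset_span)
    rintro _ ⟨ξ, rfl⟩
    simp only [ContinuousLinearMap.mul_apply, ContinuousLinearMap.neg_apply]
    have e1 : S (D ξ + (-Complex.I) • (ξ:H)) = ξ := by
      have := hres' ⟨(ξ:H), hmemc ξ⟩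
      rwa [hDc ξ] at this
    rw [e1]
    set ζ : D.domain := ⟨T ξ, hTdom ξ⟩ with hζdef
    have e2 : T (D ξ + (-Complex.I) • (ξ:H)) =
        -(D.closure ⟨(ζ:H), hmemc ζ⟩ + Complex.I • (ζ:H)) := by
      rw [map_add, map_smul, hanti ξ, hDc ζ]
      show -(D ζ) + (-Complex.I) • (T ξ) = _
      have : (ζ:H) = T ξ := rfl
      rw [this]
      module
    rw [e2, map_neg, hres ⟨(ζ:H), hmemc ζ⟩]
    simp
    rfl
  -- the set of functions satisfying the commutation relation
  set A : Set (BoundedContinuousFunction ℝ ℂ) :=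
    {g | T * Φ g = Φ (stmt6.nflip g) * T} with hAdef
  have hA1 : (1 : BoundedContinuousFunction ℝ ℂ) ∈ A := by
    show T * Φ 1 = Φ (stmt6.nflip 1) * T
    rw [stmt6.nflip_one, map_one, mul_one, one_mul]
  have hAadd : ∀ g h, g ∈ A → h ∈ A → g + h ∈ A := by
    intro g h hg hh
    show T * Φ (g + h) = Φ (stmt6.nflip (g + h)) * T
    rw [stmt6.nflip_add, map_add, map_add, mul_add, add_mul, hg, hh]
  have hAsmul : ∀ (c : ℂ) g, g ∈ A → c • g ∈ A := by
    intro c g hg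
    show T * Φ (c • g) = Φ (stmt6.nflip (c • g)) * T
    rw [stmt6.nflip_smul, map_smul, map_smul, mul_smul_comm, smul_mul_assoc, hg]
  have hAmul : ∀ g h, g ∈ A → h ∈ A → g * h ∈ A := by
    intro g h hg hh
    show T * Φ (g * h) = Φ (stmt6.nflip (g * h)) * T
    rw [stmt6.nflip_mul, map_mul, map_mul, ← mul_assoc, hg, mul_assoc, hh, ← mul_assoc]
  have hApsi : ψ ∈ A := by
    show T * Φ ψ = Φ (stmt6.nflip ψ) * T
    rw [stmt6.nflip_psiF, map_neg, ← hRdef, ← hSdef, hTR, neg_mul]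
  have hAstarpsi : star ψ ∈ A := by
    show T * Φ (star ψ) = Φ (stmt6.nflip (star ψ)) * T
    have h1 : stmt6.nflip (star ψ) = -ψ := by
      rw [stmt6.nflip_star, stmt6.nflip_psiF, star_neg, star_star]
    rw [h1, map_neg, ← hRdef, ← hSdef, hTS, neg_mul]
  have hAlim : ∀ (u : ℕ → BoundedContinuousFunction ℝ ℂ)
      (g : BoundedContinuousFunction ℝ ℂ) (C : ℝ), (∀ n, ‖u n‖ ≤ C) →
      (∀ x, Filter.Tendsto (fun n => u n x) Filter.atTop (nhds (g x))) →
      (∀ n, u n ∈ A) → g ∈ A := by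
    intro u g C hC hpt hu
    show T * Φ g = Φ (stmt6.nflip g) * T
    ext ξ
    simp only [ContinuousLinearMap.mul_apply]
    have h1 : Filter.Tendsto (fun n => T (Φ (u n) ξ)) Filter.atTop (nhds (T (Φ g ξ))) :=
      (T.continuous.tendsto _).comp (hΦcont u g C hC hpt ξ)
    have h2 : Filter.Tendsto (fun n => Φ (stmt6.nflip (u n)) (T ξ)) Filter.atTop
        (nhds (Φ (stmt6.nflip g) (T ξ))) := by
      apply hΦcont _ _ C (fun n => stmt6.nflip_norm_le _ _ (hC n))
      intro x
      simpa only [stmt6.nflip_apply] using hpt (-x)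
    have h3 : ∀ n, T (Φ (u n) ξ) = Φ (stmt6.nflip (u n)) (T ξ) := by
      intro n
      have := congrArg (fun B : H →L[ℂ] H => B ξ) (hu n)
      simpa only [ContinuousLinearMap.mul_apply] using this
    exact tendsto_nhds_unique ((Filter.tendsto_congr h3).1 h1) h2
  -- the star-stable version
  set B : Set (BoundedContinuousFunction ℝ ℂ) := {g | g ∈ A ∧ star g ∈ A} with hBdef
  have hfB : f ∈ B := by
    apply stmt6.engine B
    · exact ⟨hA1, by rw [star_one]; exact hA1⟩
    · rintro g h ⟨hg1, hg2⟩ ⟨hh1, hh2⟩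
      exact ⟨hAadd _ _ hg1 hh1, by rw [star_add]; exact hAadd _ _ hg2 hh2⟩
    · rintro g h ⟨hg1, hg2⟩ ⟨hh1, hh2⟩
      exact ⟨hAmul _ _ hg1 hh1, by rw [star_mul']; exact hAmul _ _ hg2 hh2⟩
    · rintro c g ⟨hg1, hg2⟩
      refine ⟨hAsmul c g hg1, ?_⟩
      rw [star_smul]
      exact hAsmul _ _ hg2
    · rintro g ⟨hg1, hg2⟩
      exact ⟨hg2, by rw [star_star]; exact hg1⟩
    · exact ⟨hApsi, hAstarpsi⟩
    · rintro u g C hC hpt hu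
      refine ⟨hAlim u g C hC hpt (fun n => (hu n).1), ?_⟩
      apply hAlim (fun n => star (u n)) (star g) C
        (fun n => by rw [norm_star]; exact hC n) ?_ (fun n => (hu n).2)
      intro x
      show Filter.Tendsto (fun n => star (u n x)) Filter.atTop (nhds (star (g x)))
      exact ((continuous_star.tendsto _).comp (hpt x))
  have hfA : T * Φ f = Φ (stmt6.nflip f) * T := hfB.1
  constructor
  · intro hodd
    have hflip : stmt6.nflip f = -f := by
      ext x
      rw [stmt6.nflip_apply, hodd x]
      rfl
    show T * Φ f = -(Φ f * T)
    rw [hfA, hflip, map_neg, neg_mul]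
  · intro heven
    have hflip : stmt6.nflip f = f := by
      ext x
      rw [stmt6.nflip_apply, heven x]
    show T * Φ f = Φ f * T
    rw [hfA, hflip]
end

section
/- Let h : ℝ → ℂ be an even integrable function. Then the principal-value functional φ ↦ lim_{ε→0⁺} (∫_{−∞}^{−ε} (h(t)/t)φ(t) dt + ∫_ε^∞ (h(t)/t)φ(t) dt), initially defined on compactly supported smooth functions, extends to a continuous linear functional on the Schwartz space S(ℝ), and satisfies |⟨pv(h(t)/t), φ⟩| ≤ ‖h‖_{L¹} · sup_t |φ'(t)| for all φ ∈ S(ℝ). -/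
open MeasureTheory Filter
set_option maxHeartbeats 1000000

-- derivative bound by Schwartz seminorm
lemma stmt8_deriv_le (φ : SchwartzMap ℝ ℂ) (t : ℝ) :
    ‖deriv (⇑φ) t‖ ≤ SchwartzMap.seminorm ℂ 0 1 φ := by
  rw [← iteratedDeriv_one, ← norm_iteratedFDeriv_eq_norm_iteratedDeriv]
  exact SchwartzMap.norm_iteratedFDeriv_le_seminorm ℂ φ 1 t

-- difference quotient bound
lemma stmt8_dq_le (φ : ℝ → ℂ) (hφ : Differentiable ℝ φ) (B : ℝ)
    (hB : ∀ t, ‖deriv φ t‖ ≤ B) (t : ℝ) : ‖(φ t - φ 0) / (t : ℂ)‖ ≤ B := by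
  rcases eq_or_ne t 0 with rfl | ht
  · simpa using (norm_nonneg (deriv φ 0)).trans (hB 0)
  · have key := (convex_univ : Convex ℝ (Set.univ : Set ℝ)).norm_image_sub_le_of_norm_deriv_le
      (fun x _ => hφ x) (fun x _ => hB x) (Set.mem_univ (0:ℝ)) (Set.mem_univ t)
    rw [norm_div, Complex.norm_real, Real.norm_eq_abs]
    rw [div_le_iff₀ (abs_pos.mpr ht)]
    simpa [Real.norm_eq_abs] using key

lemma stmt8_meas (φ : SchwartzMap ℝ ℂ) :
    AEStronglyMeasurable (fun t : ℝ => (φ t - φ 0) / (t : ℂ)) volume := by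
  apply Measurable.aestronglyMeasurable
  exact (φ.continuous.measurable.sub measurable_const).div Complex.measurable_ofReal

lemma stmt8_int (h : ℝ → ℂ) (hint : Integrable h) (φ : SchwartzMap ℝ ℂ) :
    Integrable (fun t : ℝ => h t * ((φ t - φ 0) / (t : ℂ))) := by
  refine Integrable.mono' (hint.norm.mul_const (SchwartzMap.seminorm ℂ 0 1 φ))
    (hint.1.mul (stmt8_meas φ)) (Filter.Eventually.of_forall fun t => ?_)
  rw [norm_mul]
  exact mul_le_mul_of_nonneg_left
    (stmt8_dq_le φ φ.differentiable _ (stmt8_deriv_le φ) t) (norm_nonneg _)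

theorem stmt8 (h : ℝ → ℂ) (hint : Integrable h) (heven : ∀ t, h (-t) = h t) :
    ∃ T : SchwartzMap ℝ ℂ →L[ℂ] ℂ,
      (∀ φ : SchwartzMap ℝ ℂ,
        Filter.Tendsto (fun ε : ℝ => ∫ t in {t : ℝ | ε ≤ |t|}, (h t / t) * φ t)
          (nhdsWithin 0 (Set.Ioi 0)) (nhds (T φ))) ∧
      (∀ (φ : SchwartzMap ℝ ℂ) (B : ℝ), (∀ t, ‖deriv (fun s : ℝ => φ s) t‖ ≤ B) →
        ‖T φ‖ ≤ (∫ t, ‖h t‖) * B) := by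
  classical
  set A : SchwartzMap ℝ ℂ → ℂ := fun φ => ∫ t, h t * ((φ t - φ 0) / (t : ℂ)) with hA
  have hAbound : ∀ (φ : SchwartzMap ℝ ℂ) (B : ℝ), (∀ t, ‖deriv (⇑φ) t‖ ≤ B) →
      ‖A φ‖ ≤ (∫ t, ‖h t‖) * B := by
    intro φ B hB
    have h1 : ‖A φ‖ ≤ ∫ t, ‖h t‖ * B := by
      refine (norm_integral_le_integral_norm _).trans ?_
      refine integral_mono (stmt8_int h hint φ).norm (hint.norm.mul_const B) fun t => ?_
      rw [norm_mul]
      exact mul_le_mul_of_nonneg_left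
        (stmt8_dq_le φ φ.differentiable B hB t) (norm_nonneg _)
    rw [integral_mul_const] at h1
    exact h1
  have hadd : ∀ f g : SchwartzMap ℝ ℂ, A (f + g) = A f + A g := by
    intro f g
    simp only [hA, SchwartzMap.add_apply]
    rw [← integral_add (stmt8_int h hint f) (stmt8_int h hint g)]
    congr 1; ext t; ring
  have hsmul : ∀ (a : ℂ) (f : SchwartzMap ℝ ℂ), A (a • f) = a • A f := by
    intro a f
    simp only [hA, SchwartzMap.smul_apply, smul_eq_mul]
    rw [← integral_const_mul]
    congr 1; ext t; ring
  have hbnd : ∃ (s : Finset (ℕ × ℕ)) (C : ℝ), 0 ≤ C ∧ ∀ f : SchwartzMap ℝ ℂ,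
      ‖A f‖ ≤ C * s.sup (schwartzSeminormFamily ℂ ℝ ℂ) f := by
    refine ⟨{(0,1)}, ∫ t, ‖h t‖, integral_nonneg fun t => norm_nonneg _, fun φ => ?_⟩
    rw [Finset.sup_singleton]
    exact hAbound φ _ (stmt8_deriv_le φ)
  refine ⟨SchwartzMap.mkCLMtoNormedSpace (𝕜 := ℂ) (𝕜' := ℂ) (σ := RingHom.id ℂ) A hadd
    (fun a f => hsmul a f) hbnd, ?_, ?_⟩
  · -- tendsto
    intro φ
    show Filter.Tendsto _ _ (nhds (A φ))
    -- eventual equality on (0, ∞)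
    have hS : ∀ ε : ℝ, MeasurableSet {t : ℝ | ε ≤ |t|} := by
      intro ε
      exact (isClosed_le continuous_const continuous_abs).measurableSet
    have heq : ∀ ε ∈ Set.Ioi (0:ℝ),
        (∫ t in {t : ℝ | ε ≤ |t|}, (h t / t) * φ t)
          = ∫ t in {t : ℝ | ε ≤ |t|}, h t * ((φ t - φ 0) / (t : ℂ)) := by
      intro ε hε
      rw [Set.mem_Ioi] at hε
      have hf2 : IntegrableOn (fun t : ℝ => h t / (t : ℂ)) {t : ℝ | ε ≤ |t|} := by
        have hm : AEStronglyMeasurable (fun t : ℝ => h t / (t : ℂ)) volume := by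
          simp_rw [div_eq_mul_inv]
          exact hint.1.mul (Complex.measurable_ofReal.inv.aestronglyMeasurable)
        refine Integrable.mono' ((hint.norm.const_mul ε⁻¹).restrict) hm.restrict ?_
        refine (ae_restrict_iff' (hS ε)).2 (Filter.Eventually.of_forall fun t ht => ?_)
        rw [norm_div, Complex.norm_real, Real.norm_eq_abs, div_le_iff₀ (lt_of_lt_of_le hε ht)]
        rw [mul_comm (ε⁻¹ * ‖h t‖) |t|, ← mul_assoc]
        refine le_mul_of_one_le_left (norm_nonneg _) ?_
        rw [← div_eq_mul_inv, le_div_iff₀ hε, one_mul]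
        exact ht
      have hsplit : ∀ t : ℝ, (h t / t) * φ t
          = h t * ((φ t - φ 0) / (t : ℂ)) + φ 0 * (h t / (t : ℂ)) := by
        intro t
        rcases eq_or_ne t 0 with rfl | ht
        · simp
        · have : (t : ℂ) ≠ 0 := by exact_mod_cast ht
          field_simp
          ring
      have hodd : (∫ t in {t : ℝ | ε ≤ |t|}, h t / (t : ℂ)) = 0 := by
        set F : ℝ → ℂ := ({t : ℝ | ε ≤ |t|}).indicator (fun t => h t / (t : ℂ)) with hF
        have hFint : (∫ t in {t : ℝ | ε ≤ |t|}, h t / (t : ℂ)) = ∫ t, F t := by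
          rw [hF, integral_indicator (hS ε)]
        have hFodd : ∀ x : ℝ, F (-x) = - F x := by
          intro x
          by_cases hx : ε ≤ |x|
          · have hxm : x ∈ {t : ℝ | ε ≤ |t|} := hx
            have hxm' : -x ∈ {t : ℝ | ε ≤ |t|} := by
              simp only [Set.mem_setOf_eq, abs_neg]; exact hx
            rw [hF, Set.indicator_of_mem hxm', Set.indicator_of_mem hxm,
              heven, Complex.ofReal_neg, div_neg]
          · have hxm : x ∉ {t : ℝ | ε ≤ |t|} := hx
            have hxm' : -x ∉ {t : ℝ | ε ≤ |t|} := by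
              simp only [Set.mem_setOf_eq, abs_neg]; exact hx
            rw [hF, Set.indicator_of_notMem hxm', Set.indicator_of_notMem hxm, neg_zero]
        have h2 : (∫ t, F t) = - ∫ t, F t := by
          have e1 : (∫ t, F t) = ∫ t, F (-t) := (integral_neg_eq_self F volume).symm
          have e2 : (∫ t, F (-t)) = ∫ t, - F t := by congr 1; funext t; exact hFodd t
          exact e1.trans (e2.trans (integral_neg F))
        rw [hFint]
        linear_combination h2 / 2
      calc (∫ t in {t : ℝ | ε ≤ |t|}, (h t / t) * φ t)
          = ∫ t in {t : ℝ | ε ≤ |t|},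
              (h t * ((φ t - φ 0) / (t : ℂ)) + φ 0 * (h t / (t : ℂ))) := by
            exact setIntegral_congr_fun (hS ε) fun t _ => hsplit t
        _ = (∫ t in {t : ℝ | ε ≤ |t|}, h t * ((φ t - φ 0) / (t : ℂ)))
              + ∫ t in {t : ℝ | ε ≤ |t|}, φ 0 * (h t / (t : ℂ)) := by
            rw [integral_add ((stmt8_int h hint φ).restrict) (hf2.const_mul _)]
        _ = ∫ t in {t : ℝ | ε ≤ |t|}, h t * ((φ t - φ 0) / (t : ℂ)) := by
            rw [integral_const_mul, hodd, mul_zero, add_zero]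
    -- now show tendsto of the gφ integrals
    have hmain : Filter.Tendsto
        (fun ε : ℝ => ∫ t in {t : ℝ | ε ≤ |t|}, h t * ((φ t - φ 0) / (t : ℂ)))
        (nhdsWithin 0 (Set.Ioi 0)) (nhds (A φ)) := by
      have hcompl : ∀ ε : ℝ,
          (∫ t in {t : ℝ | ε ≤ |t|}, h t * ((φ t - φ 0) / (t : ℂ)))
            = A φ - ∫ t in {t : ℝ | ε ≤ |t|}ᶜ, h t * ((φ t - φ 0) / (t : ℂ)) := by
        intro ε
        have := integral_add_compl (hS ε) (stmt8_int h hint φ)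
        rw [hA]
        linear_combination this
      simp_rw [hcompl]
      have hzero : Filter.Tendsto
          (fun ε : ℝ => ∫ t in {t : ℝ | ε ≤ |t|}ᶜ, h t * ((φ t - φ 0) / (t : ℂ)))
          (nhdsWithin 0 (Set.Ioi 0)) (nhds 0) := by
        refine (stmt8_int h hint φ).tendsto_setIntegral_nhds_zero ?_
        have hsets : ∀ ε : ℝ, {t : ℝ | ε ≤ |t|}ᶜ = Set.Ioo (-ε) ε := by
          intro ε
          ext t
          simp [abs_lt, not_le, and_comm]
        have : (fun ε : ℝ => volume ({t : ℝ | ε ≤ |t|}ᶜ))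
            = fun ε : ℝ => ENNReal.ofReal (ε - (-ε)) := by
          funext ε; rw [hsets, Real.volume_Ioo]
        show Filter.Tendsto (fun ε : ℝ => volume ({t : ℝ | ε ≤ |t|}ᶜ)) _ _
        rw [this]
        have h1 : Filter.Tendsto (fun ε : ℝ => ε - (-ε)) (nhdsWithin (0:ℝ) (Set.Ioi 0)) (nhds 0) := by
          have h0 : Filter.Tendsto (fun ε : ℝ => ε - (-ε)) (nhds (0:ℝ)) (nhds ((0:ℝ) - (-(0:ℝ)))) :=
            (continuous_id.sub continuous_id.neg).tendsto 0
          simpa using h0.mono_left nhdsWithin_le_nhds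
        have := (ENNReal.continuous_ofReal.tendsto 0).comp h1
        simpa [Function.comp_def] using this
      have := Filter.Tendsto.sub (tendsto_const_nhds (x := A φ)) hzero
      simpa using this
    refine Filter.Tendsto.congr' ?_ hmain
    filter_upwards [self_mem_nhdsWithin] with ε hε
    exact (heq ε hε).symm
  · intro φ B hB
    exact hAbound φ B hB
end

section
/- Let h : ℝ → ℂ be an even integrable function. Then the function ζ(x) := ∫_{−∞}^∞ (sin(tx)/(it)) h(t/(2π)) dt is well-defined for each x ∈ ℝ (the integrand is bounded by |x|·|h(t/(2π))|), and the tempered distribution given by integration against ζ is the Fourier transform of the principal-value distribution pv(h(t)/t). -/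
open MeasureTheory
open scoped FourierTransform Real

private lemma exp_sub_exp (θ : ℝ) :
    Complex.exp (-(θ:ℂ) * Complex.I) - Complex.exp ((θ:ℂ) * Complex.I)
    = -2 * Complex.I * Real.sin θ := by
  rw [Complex.ofReal_sin, Complex.exp_mul_I, Complex.exp_mul_I, Complex.cos_neg, Complex.sin_neg]
  ring

private lemma sin_div_bound (x t : ℝ) :
    ‖(Real.sin (t * x) : ℂ) / (Complex.I * t)‖ ≤ |x| := by
  rcases eq_or_ne t 0 with rfl | ht
  · simp
  · rw [norm_div, norm_mul, Complex.norm_I, one_mul, Complex.norm_real, Complex.norm_real,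
      Real.norm_eq_abs, Real.norm_eq_abs, div_le_iff₀ (by positivity)]
    calc |Real.sin (t * x)| ≤ |t * x| := Real.abs_sin_le_abs
    _ = |x| * |t| := by rw [abs_mul]; ring

private lemma sin_div_real_bound (t y : ℝ) :
    |Real.sin (2 * π * t * y) / t| ≤ 2 * π * |y| := by
  rcases eq_or_ne t 0 with rfl | ht
  · simp [Real.pi_pos.le, mul_nonneg]
  · rw [abs_div, div_le_iff₀ (by positivity)]
    calc |Real.sin (2 * π * t * y)| ≤ |2 * π * t * y| := Real.abs_sin_le_abs
    _ = 2 * π * |y| * |t| := by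
        rw [abs_mul, abs_mul, abs_mul, abs_of_nonneg (by norm_num : (2:ℝ) ≥ 0).le,
          abs_of_nonneg Real.pi_pos.le]
        ring

theorem stmt9 (h : ℝ → ℂ) (hint : Integrable h) (heven : ∀ t, h (-t) = h t)
    (ζ : ℝ → ℂ)
    (hζ : ∀ x : ℝ, ζ x =
      ∫ t : ℝ, ((Real.sin (t * x) : ℂ) / (Complex.I * t)) * h (t / (2 * Real.pi))) :
    (∀ x : ℝ, Integrable
        (fun t : ℝ => ((Real.sin (t * x) : ℂ) / (Complex.I * t)) * h (t / (2 * Real.pi)))) ∧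
    (∀ φ : SchwartzMap ℝ ℂ,
      Filter.Tendsto
        (fun ε : ℝ => ∫ t in {t : ℝ | ε ≤ |t|}, (h t / t) * 𝓕 (fun y : ℝ => φ y) t)
        (nhdsWithin 0 (Set.Ioi 0)) (nhds (∫ x, ζ x * φ x))) := by
  have hπ : (2 * π : ℝ) ≠ 0 := by positivity
  have hcomp : Integrable (fun t : ℝ => h (t / (2 * π))) := hint.comp_div hπ
  have hmeas_sin : ∀ x : ℝ, AEStronglyMeasurable
      (fun t : ℝ => (Real.sin (t * x) : ℂ) / (Complex.I * t)) volume := by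
    intro x
    apply Measurable.aestronglyMeasurable
    exact ((Complex.measurable_ofReal.comp (Real.measurable_sin.comp
      (measurable_id.mul_const x))).div
      ((measurable_const.mul (Complex.measurable_ofReal.comp measurable_id))))
  constructor
  · intro x
    exact hcomp.bdd_mul (hmeas_sin x) (Filter.Eventually.of_forall fun t => sin_div_bound x t)
  intro φ
  set Fφ : ℝ → ℂ := 𝓕 (fun y : ℝ => φ y) with hFφdef
  -- basic integrability facts about φ
  have hφint : Integrable (fun y : ℝ => φ y) := φ.integrable
  have hyφint : Integrable (fun y : ℝ => ‖y‖ * ‖φ y‖) := by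
    simpa using φ.integrable_pow_mul volume 1
  set Cφ : ℝ := ∫ y : ℝ, ‖y‖ * ‖φ y‖ with hCφdef
  have hCφ0 : 0 ≤ Cφ := integral_nonneg fun y => by positivity
  set M : ℝ := ∫ y : ℝ, ‖φ y‖ with hMdef
  -- Fourier transform formula and bound
  have hFform : ∀ t : ℝ, Fφ t = ∫ y : ℝ, Complex.exp ((-2 * π * y * t : ℝ) * Complex.I) * φ y := by
    intro t
    rw [hFφdef, Real.fourier_real_eq_integral_exp_smul]
    simp [smul_eq_mul]
  have hFbound : ∀ t : ℝ, ‖Fφ t‖ ≤ M := by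
    intro t
    rw [hFφdef, Real.fourier_eq]
    refine (norm_integral_le_integral_norm _).trans (le_of_eq ?_)
    congr 1; ext y; simp [norm_smul]
  have hFcont : Continuous Fφ :=
    VectorFourier.fourierIntegral_continuous Real.continuous_fourierChar
      (by exact continuous_inner) hφint
  -- integrability of exponential-modulated φ
  have hexp_int : ∀ c : ℝ → ℝ, Measurable c →
      Integrable (fun y : ℝ => Complex.exp ((c y : ℝ) * Complex.I) * φ y) := by
    intro c hc
    refine hφint.bdd_mul (c := 1) ?_ (Filter.Eventually.of_forall fun y => by rw [Complex.norm_exp_ofReal_mul_I])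
    exact (Complex.measurable_exp.comp
      ((Complex.measurable_ofReal.comp hc).mul_const Complex.I)).aestronglyMeasurable
  -- key identity: Fφ t - Fφ (-t) as an integral against sin
  have key : ∀ t : ℝ, Fφ t - Fφ (-t)
      = ∫ y : ℝ, (-2 * Complex.I * Real.sin (2 * π * t * y)) * φ y := by
    intro t
    have e1 : Fφ t = ∫ y : ℝ, Complex.exp ((-(2 * π * t * y) : ℝ) * Complex.I) * φ y := by
      rw [hFform t]; congr 1; ext y; congr 2; push_cast; ring
    have e2 : Fφ (-t) = ∫ y : ℝ, Complex.exp (((2 * π * t * y) : ℝ) * Complex.I) * φ y := by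
      rw [hFform (-t)]; congr 1; ext y; congr 2; push_cast; ring
    rw [e1, e2, ← integral_sub (hexp_int _ (by fun_prop)) (hexp_int _ (by fun_prop))]
    congr 1; ext y
    rw [← sub_mul]
    congr 1
    have := exp_sub_exp (2 * π * t * y)
    rw [Complex.ofReal_neg]
    exact this
  -- the symmetrized integrand ψ
  set ψ : ℝ → ℂ := fun t => (h t / t) * ((Fφ t - Fφ (-t)) / 2) with hψdef
  have hψ0 : ψ 0 = 0 := by simp [hψdef]
  -- bound on Fφ t - Fφ (-t)
  have hdiffbound : ∀ t : ℝ, ‖Fφ t - Fφ (-t)‖ ≤ 4 * π * Cφ * |t| := by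
    intro t
    rw [key t]
    have hb : ∀ y : ℝ, ‖(-2 * Complex.I * Real.sin (2 * π * t * y)) * φ y‖
        ≤ (4 * π * |t|) * (‖y‖ * ‖φ y‖) := by
      intro y
      rw [norm_mul, norm_mul, norm_mul, Complex.norm_I, Complex.norm_real]
      have h1 : ‖(-2 : ℂ)‖ = 2 := by simp
      rw [h1, mul_one, Real.norm_eq_abs]
      have h2 : |Real.sin (2 * π * t * y)| ≤ 2 * π * |t| * ‖y‖ := by
        refine Real.abs_sin_le_abs.trans (le_of_eq ?_)
        rw [abs_mul, abs_mul, abs_mul, abs_of_nonneg (by norm_num : (0:ℝ) ≤ 2),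
          abs_of_nonneg Real.pi_pos.le, Real.norm_eq_abs]
      calc 2 * |Real.sin (2 * π * t * y)| * ‖φ y‖
          ≤ 2 * (2 * π * |t| * ‖y‖) * ‖φ y‖ := by
            apply mul_le_mul_of_nonneg_right _ (norm_nonneg _)
            exact mul_le_mul_of_nonneg_left h2 (by norm_num)
        _ = (4 * π * |t|) * (‖y‖ * ‖φ y‖) := by ring
    refine (norm_integral_le_of_norm_le (hyφint.const_mul _) (Filter.Eventually.of_forall hb)).trans
      (le_of_eq ?_)
    rw [integral_const_mul]
    ring
  -- ψ is integrable
  have hinv : Measurable fun t : ℝ => ((t : ℂ))⁻¹ := Complex.measurable_ofReal.inv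
  have hdivmeas : AEStronglyMeasurable (fun t : ℝ => h t / (t : ℂ)) volume := by
    simp only [div_eq_mul_inv]
    exact hint.1.mul hinv.aestronglyMeasurable
  have hψmeas : AEStronglyMeasurable ψ volume := by
    rw [hψdef]
    exact hdivmeas.mul
      (((hFcont.sub (hFcont.comp continuous_neg)).div_const 2).aestronglyMeasurable)
  have hψbound : ∀ t : ℝ, ‖ψ t‖ ≤ (2 * π * Cφ) * ‖h t‖ := by
    intro t
    rcases eq_or_ne t 0 with rfl | ht
    · rw [hψ0]; simp; positivity
    · have : ‖ψ t‖ = ‖h t‖ / |t| * (‖Fφ t - Fφ (-t)‖ / 2) := by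
        rw [hψdef]
        simp only [norm_mul, norm_div, Complex.norm_real, Real.norm_eq_abs]
        norm_num
      rw [this]
      calc ‖h t‖ / |t| * (‖Fφ t - Fφ (-t)‖ / 2)
          ≤ ‖h t‖ / |t| * ((4 * π * Cφ * |t|) / 2) := by
            gcongr
            exact hdiffbound t
        _ = (2 * π * Cφ) * ‖h t‖ := by field_simp; ring
  have hψint : Integrable ψ :=
    Integrable.mono' (hint.norm.const_mul (2 * π * Cφ)) hψmeas
      (Filter.Eventually.of_forall hψbound)
  -- the double integrand
  set G : ℝ → ℝ → ℂ := fun t y =>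
    (-Complex.I) * ((Real.sin (2 * π * t * y) / t : ℝ) : ℂ) * h t with hGdef
  set F : ℝ → ℝ → ℂ := fun t y => G t y * φ y with hFdef2
  -- pointwise: ψ t = ∫ y, F t y
  have ptws : ∀ t y : ℝ, (h t / t) * ((-2 * Complex.I * Real.sin (2 * π * t * y)) * φ y / 2)
      = F t y := by
    intro t y
    rcases eq_or_ne t 0 with rfl | ht
    · simp [hFdef2, hGdef]
    · rw [hFdef2, hGdef]
      have htc : (t : ℂ) ≠ 0 := Complex.ofReal_ne_zero.mpr ht
      push_cast
      field_simp
  have ψ_eq : ∀ t : ℝ, ψ t = ∫ y : ℝ, F t y := by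
    intro t
    rw [hψdef]
    simp only
    rw [key t]
    rw [show (h t / t) * ((∫ y : ℝ, (-2 * Complex.I * Real.sin (2 * π * t * y)) * φ y) / 2)
      = (h t / t / 2) * ∫ y : ℝ, (-2 * Complex.I * Real.sin (2 * π * t * y)) * φ y by ring]
    rw [← integral_const_mul]
    congr 1; ext y
    rw [← ptws t y]; ring
  -- integrability of the uncurried double integrand
  have hFmeas : AEStronglyMeasurable (Function.uncurry F) (volume.prod volume) := by
    apply AEStronglyMeasurable.mul
    apply AEStronglyMeasurable.mul
    · apply Measurable.aestronglyMeasurable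
      apply measurable_const.mul
      apply Complex.measurable_ofReal.comp
      exact (Real.measurable_sin.comp (by fun_prop)).div measurable_fst
    · exact hint.1.comp_fst
    · exact (φ.continuous.comp continuous_snd).aestronglyMeasurable
  have hFintprod : Integrable (Function.uncurry F) (volume.prod volume) := by
    refine Integrable.mono' (((hint.norm.const_mul (2 * π)).mul_prod hyφint)) hFmeas
      (Filter.Eventually.of_forall ?_)
    rintro ⟨t, y⟩
    simp only [Function.uncurry, hFdef2, hGdef]
    rw [norm_mul, norm_mul, norm_mul, norm_neg, Complex.norm_I, one_mul, Complex.norm_real,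
      Real.norm_eq_abs]
    calc |Real.sin (2 * π * t * y) / t| * ‖h t‖ * ‖φ y‖
        ≤ (2 * π * |y|) * ‖h t‖ * ‖φ y‖ := by
          gcongr
          exact sin_div_real_bound t y
      _ = 2 * π * ‖h t‖ * (‖y‖ * ‖φ y‖) := by rw [Real.norm_eq_abs]; ring
  -- swap the order of integration
  have swap : ∫ t : ℝ, ψ t = ∫ y : ℝ, (∫ t : ℝ, G t y) * φ y := by
    rw [integral_congr_ae (Filter.Eventually.of_forall ψ_eq)]
    rw [integral_integral_swap hFintprod]
    congr 1; ext y
    rw [hFdef2]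
    simp only
    rw [integral_mul_const]
  -- identify the inner integral with ζ
  have ζ_eq : ∀ y : ℝ, ζ y = ∫ t : ℝ, G t y := by
    intro y
    set f0 : ℝ → ℂ := fun s => ((Real.sin (s * y) : ℂ) / (Complex.I * s)) * h (s / (2 * π))
      with hf0
    have hcv := MeasureTheory.Measure.integral_comp_mul_left f0 (2 * π)
    rw [abs_of_pos (by positivity : (0:ℝ) < (2 * π)⁻¹)] at hcv
    have h2 : (∫ s : ℝ, f0 s) = (2 * π : ℝ) • ∫ x : ℝ, f0 (2 * π * x) := by
      rw [hcv, smul_smul, mul_inv_cancel₀ hπ, one_smul]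
    rw [hζ y]
    have hrw : (∫ t : ℝ, ((Real.sin (t * y) : ℂ) / (Complex.I * t)) * h (t / (2 * Real.pi)))
        = ∫ s : ℝ, f0 s := rfl
    rw [hrw, h2, ← integral_smul]
    congr 1; ext t
    rw [hf0]
    simp only
    have harg : 2 * π * t / (2 * π) = t := by field_simp
    rw [harg]
    rcases eq_or_ne t 0 with rfl | ht
    · show (2 * π : ℝ) • ((Real.sin (2 * π * 0 * y) : ℂ) / (Complex.I * ((2 * π * 0 : ℝ) : ℂ))
        * h 0) = G 0 y
      rw [hGdef]
      norm_num
    · have htc : (t : ℂ) ≠ 0 := Complex.ofReal_ne_zero.mpr ht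
      have hπc : ((π : ℝ) : ℂ) ≠ 0 := Complex.ofReal_ne_zero.mpr Real.pi_ne_zero
      rw [hGdef, Complex.real_smul]
      simp only
      push_cast
      rw [div_mul_eq_mul_div, mul_div_assoc]
      field_simp
      linear_combination (Complex.sin (2 * (π : ℂ) * (t : ℂ) * (y : ℂ)) * h t) * Complex.I_sq
  have final_eq : ∫ t : ℝ, ψ t = ∫ x : ℝ, ζ x * φ x := by
    rw [swap]
    congr 1; ext y
    rw [ζ_eq y]
  -- the sets S ε and symmetrization
  have hSmeas : ∀ ε : ℝ, MeasurableSet {t : ℝ | ε ≤ |t|} := by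
    intro ε
    exact measurableSet_le measurable_const (measurable_id.abs)
  -- integrability on S ε for ε > 0
  have hIntOn : ∀ ε : ℝ, 0 < ε → ∀ g : ℝ → ℂ, Continuous g → (∀ t, ‖g t‖ ≤ M) →
      IntegrableOn (fun t => (h t / t) * g t) {t : ℝ | ε ≤ |t|} := by
    intro ε hε g hg hgM
    have hM0 : 0 ≤ M := le_trans (norm_nonneg _) (hgM 0)
    refine Integrable.mono' ((hint.norm.const_mul (M / ε)).restrict) ?_ ?_
    · exact (hdivmeas.mul hg.aestronglyMeasurable).restrict
    · rw [ae_restrict_iff' (hSmeas ε)]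
      refine Filter.Eventually.of_forall fun t ht => ?_
      have htabs : ε ≤ |t| := ht
      have ht0 : t ≠ 0 := by
        intro h0; rw [h0] at htabs; simp at htabs; linarith
      rw [norm_mul, norm_div, Complex.norm_real, Real.norm_eq_abs]
      have habs0 : 0 < |t| := lt_of_lt_of_le hε htabs
      calc ‖h t‖ / |t| * ‖g t‖ ≤ ‖h t‖ / ε * M := by
            apply mul_le_mul _ (hgM t) (norm_nonneg _) (by positivity)
            exact div_le_div_of_nonneg_left (norm_nonneg _) hε htabs
        _ = M / ε * ‖h t‖ := by field_simp
  -- the set integral of the original integrand equals that of ψ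
  have hseteq : ∀ ε : ℝ, 0 < ε →
      ∫ t in {t : ℝ | ε ≤ |t|}, (h t / t) * Fφ t = ∫ t in {t : ℝ | ε ≤ |t|}, ψ t := by
    intro ε hε
    set S := {t : ℝ | ε ≤ |t|} with hSdef
    have hfS : IntegrableOn (fun t => (h t / t) * Fφ t) S := by
      rw [hSdef]; exact hIntOn ε hε Fφ hFcont hFbound
    have huS : IntegrableOn (fun t => (h t / t) * Fφ (-t)) S := by
      rw [hSdef]
      exact hIntOn ε hε (fun t => Fφ (-t)) (hFcont.comp continuous_neg) fun t => hFbound (-t)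
    have hsymm : ∫ t in S, (h t / t) * Fφ (-t) = - ∫ t in S, (h t / t) * Fφ t := by
      have hSsym : ∀ t : ℝ, (-t ∈ S) ↔ (t ∈ S) := by
        intro t; simp [hSdef, abs_neg]
      calc ∫ t in S, (h t / t) * Fφ (-t)
          = ∫ t : ℝ, S.indicator (fun t => (h t / t) * Fφ (-t)) t := by
            rw [integral_indicator (hSmeas ε)]
        _ = ∫ t : ℝ, S.indicator (fun t => (h t / t) * Fφ (-t)) (-t) := by
            exact (integral_neg_eq_self _ _).symm
        _ = ∫ t : ℝ, S.indicator (fun t => -((h t / t) * Fφ t)) t := by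
            congr 1; ext t
            by_cases htS : t ∈ S
            · rw [Set.indicator_of_mem ((hSsym t).mpr htS), Set.indicator_of_mem htS]
              rw [heven t, neg_neg, Complex.ofReal_neg, div_neg]
              ring
            · rw [Set.indicator_of_notMem (fun hc => htS ((hSsym t).mp hc)),
                Set.indicator_of_notMem htS]
        _ = - ∫ t in S, (h t / t) * Fφ t := by
            rw [integral_indicator (hSmeas ε), integral_neg]
    have step1 : ∫ t in S, ψ t
        = ∫ t in S, ((h t / t) * Fφ t - (h t / t) * Fφ (-t)) / 2 := by
      apply integral_congr_ae
      refine Filter.Eventually.of_forall fun t => ?_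
      rw [hψdef]
      ring
    have step2 : ∫ t in S, ((h t / t) * Fφ t - (h t / t) * Fφ (-t)) / 2
        = (∫ t in S, ((h t / t) * Fφ t - (h t / t) * Fφ (-t))) / 2 := integral_div _ _
    have step3 : (∫ t in S, ((h t / t) * Fφ t - (h t / t) * Fφ (-t)))
        = (∫ t in S, (h t / t) * Fφ t) - ∫ t in S, (h t / t) * Fφ (-t) :=
      integral_sub hfS huS
    rw [step1, step2, step3, hsymm,
      show ∀ z : ℂ, (z - -z) / 2 = z from fun z => by ring]
  -- the limit
  have hcompl : ∀ ε : ℝ, {t : ℝ | ε ≤ |t|}ᶜ = {t : ℝ | |t| < ε} := by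
    intro ε; ext t; simp [not_le]
  have htendszero : Filter.Tendsto (fun ε : ℝ => ∫ t in {t : ℝ | ε ≤ |t|}ᶜ, ψ t)
      (nhdsWithin 0 (Set.Ioi 0)) (nhds 0) := by
    apply hψint.tendsto_setIntegral_nhds_zero
    have hvol : ∀ ε : ℝ, volume {t : ℝ | ε ≤ |t|}ᶜ ≤ ENNReal.ofReal (2 * ε) := by
      intro ε
      rw [hcompl ε]
      have hsub : {t : ℝ | |t| < ε} ⊆ Set.Ioo (-ε) ε := by
        intro t ht
        simp only [Set.mem_setOf_eq, abs_lt] at ht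
        exact ht
      calc volume {t : ℝ | |t| < ε} ≤ volume (Set.Ioo (-ε) ε) := measure_mono hsub
        _ = ENNReal.ofReal (ε - (-ε)) := by rw [Real.volume_Ioo]
        _ = ENNReal.ofReal (2 * ε) := by ring_nf
    have h2ε : Filter.Tendsto (fun ε : ℝ => ENNReal.ofReal (2 * ε))
        (nhdsWithin 0 (Set.Ioi 0)) (nhds 0) := by
      have : Filter.Tendsto (fun ε : ℝ => 2 * ε) (nhdsWithin 0 (Set.Ioi 0)) (nhds 0) := by
        have h1 : Filter.Tendsto (fun ε : ℝ => 2 * ε) (nhds 0) (nhds 0) := by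
          simpa using (continuous_mul_left (2 : ℝ)).tendsto (0 : ℝ)
        exact h1.mono_left nhdsWithin_le_nhds
      have h3 := (ENNReal.continuous_ofReal.tendsto 0).comp this
      rwa [ENNReal.ofReal_zero] at h3
    exact tendsto_of_tendsto_of_tendsto_of_le_of_le' tendsto_const_nhds h2ε
      (Filter.Eventually.of_forall fun ε => zero_le)
      (Filter.Eventually.of_forall fun ε => hvol ε)
  have hsplit : ∀ ε : ℝ, ∫ t in {t : ℝ | ε ≤ |t|}, ψ t
      = (∫ t : ℝ, ψ t) - ∫ t in {t : ℝ | ε ≤ |t|}ᶜ, ψ t := by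
    intro ε
    rw [eq_sub_iff_add_eq, integral_add_compl (hSmeas ε) hψint]
  have hlim : Filter.Tendsto (fun ε : ℝ => ∫ t in {t : ℝ | ε ≤ |t|}, ψ t)
      (nhdsWithin 0 (Set.Ioi 0)) (nhds (∫ t : ℝ, ψ t)) := by
    simp only [hsplit]
    simpa using htendszero.const_sub (∫ t : ℝ, ψ t)
  rw [← final_eq]
  refine Filter.Tendsto.congr' ?_ hlim
  filter_upwards [self_mem_nhdsWithin] with ε hε
  exact (hseteq ε hε).symm
end

section
/- Schur's test: Let k : ℝⁿ × ℝⁿ → ℂ be a measurable kernel such that sup_x ∫|k(x,y)| dy ≤ α and sup_y ∫|k(x,y)| dx ≤ β. Then the integral operator (Tu)(x) = ∫ k(x,y)u(y) dy defines a bounded operator on L²(ℝⁿ) with operator norm at most √(αβ). -/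
set_option maxHeartbeats 1000000

open MeasureTheory ENNReal

namespace Schur16

variable {X : Type*} [MeasurableSpace X] {μ : Measure X} [SigmaFinite μ]

lemma half_half (a : ℝ≥0∞) : a ^ (1/2 : ℝ) * a ^ (1/2 : ℝ) = a := by
  rw [← ENNReal.rpow_add_of_nonneg _ _ (by norm_num) (by norm_num)]
  norm_num

lemma sq_half (a : ℝ≥0∞) : (a ^ (1/2 : ℝ)) ^ (2 : ℕ) = a := by
  rw [← ENNReal.rpow_natCast, ← ENNReal.rpow_mul]
  norm_num

lemma cs (w g : X → ℝ≥0∞) (hw : AEMeasurable w μ) (hg : AEMeasurable g μ) :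
    (∫⁻ y, w y * g y ∂μ) ^ (2:ℕ) ≤ (∫⁻ y, w y ∂μ) * ∫⁻ y, w y * g y ^ (2:ℕ) ∂μ := by
  have hconj : Real.HolderConjugate 2 2 := Real.holderConjugate_iff.mpr ⟨one_lt_two, by norm_num⟩
  have hw2 : AEMeasurable (fun y => w y ^ (1/2 : ℝ)) μ :=
    ENNReal.continuous_rpow_const.measurable.comp_aemeasurable hw
  have h := ENNReal.lintegral_mul_le_Lp_mul_Lq μ hconj hw2 (hw2.mul hg)
  have h2 : ∀ a : ℝ≥0∞, (a ^ (1/2 : ℝ)) ^ (2:ℝ) = a := fun a => by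
    rw [← ENNReal.rpow_mul]; norm_num
  have hr2 : ∀ a : ℝ≥0∞, a ^ (2:ℝ) = a ^ (2:ℕ) := fun a => by
    rw [← ENNReal.rpow_natCast]; norm_num
  have h3 : ∀ a b : ℝ≥0∞, (a ^ (1/2 : ℝ) * b) ^ (2:ℝ) = a * b ^ (2:ℕ) := fun a b => by
    rw [ENNReal.mul_rpow_of_nonneg _ _ (by norm_num : (0:ℝ) ≤ 2), h2, hr2]
  simp only [Pi.mul_apply, ← mul_assoc, half_half, h2, h3] at h
  calc (∫⁻ y, w y * g y ∂μ) ^ (2:ℕ)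
      ≤ ((∫⁻ y, w y ∂μ) ^ (1/2:ℝ) * (∫⁻ y, w y * g y ^ (2:ℕ) ∂μ) ^ (1/2:ℝ)) ^ (2:ℕ) :=
        pow_le_pow_left' h 2
    _ = (∫⁻ y, w y ∂μ) * ∫⁻ y, w y * g y ^ (2:ℕ) ∂μ := by
        rw [mul_pow, sq_half, sq_half]

lemma pow_half (a : ℝ≥0∞) : (a ^ (2:ℕ)) ^ (1/2 : ℝ) = a := by
  rw [← ENNReal.rpow_natCast, ← ENNReal.rpow_mul]
  norm_num

lemma eLpNorm_two (f : X → ℂ) :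
    eLpNorm f 2 μ = (∫⁻ x, (‖f x‖₊ : ℝ≥0∞) ^ (2:ℕ) ∂μ) ^ (1/2:ℝ) := by
  rw [eLpNorm_eq_lintegral_rpow_enorm_toReal two_ne_zero ENNReal.ofNat_ne_top]
  norm_num [ENNReal.rpow_natCast]
  rfl


variable {n : ℕ} {k : (Fin n → ℝ) → (Fin n → ℝ) → ℂ} {α β : ℝ}

lemma key (hk : Measurable (Function.uncurry k))
    (hrow : ∀ x, ∫⁻ y, ‖k x y‖₊ ∂volume ≤ ENNReal.ofReal α)
    (hcol : ∀ y, ∫⁻ x, ‖k x y‖₊ ∂volume ≤ ENNReal.ofReal β)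
    (f : (Fin n → ℝ) → ℂ) (hf : AEMeasurable f volume) :
    ∫⁻ x, (∫⁻ y, (‖k x y‖₊ : ℝ≥0∞) * ‖f y‖₊ ∂volume) ^ (2:ℕ) ∂volume
      ≤ ENNReal.ofReal α * ENNReal.ofReal β * ∫⁻ y, (‖f y‖₊ : ℝ≥0∞) ^ (2:ℕ) ∂volume := by
  have hkm : ∀ x : Fin n → ℝ, Measurable fun y => (‖k x y‖₊ : ℝ≥0∞) := fun x =>
    ((hk.comp (measurable_prodMk_left : Measurable fun y => (x, y))).enorm : _)
  have step1 : ∀ x, (∫⁻ y, (‖k x y‖₊ : ℝ≥0∞) * ‖f y‖₊ ∂volume) ^ (2:ℕ)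
      ≤ ENNReal.ofReal α * ∫⁻ y, (‖k x y‖₊ : ℝ≥0∞) * (‖f y‖₊ : ℝ≥0∞) ^ (2:ℕ) ∂volume := by
    intro x
    refine le_trans (cs _ _ (hkm x).aemeasurable hf.enorm) ?_
    exact mul_le_mul' (hrow x) le_rfl
  calc ∫⁻ x, (∫⁻ y, (‖k x y‖₊ : ℝ≥0∞) * ‖f y‖₊ ∂volume) ^ (2:ℕ) ∂volume
      ≤ ∫⁻ x, ENNReal.ofReal α * ∫⁻ y, (‖k x y‖₊ : ℝ≥0∞) * (‖f y‖₊ : ℝ≥0∞) ^ (2:ℕ) ∂volume ∂volume :=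
        lintegral_mono step1
    _ = ENNReal.ofReal α * ∫⁻ x, ∫⁻ y, (‖k x y‖₊ : ℝ≥0∞) * (‖f y‖₊ : ℝ≥0∞) ^ (2:ℕ) ∂volume ∂volume :=
        lintegral_const_mul' _ _ ENNReal.ofReal_ne_top
    _ = ENNReal.ofReal α * ∫⁻ y, ∫⁻ x, (‖k x y‖₊ : ℝ≥0∞) * (‖f y‖₊ : ℝ≥0∞) ^ (2:ℕ) ∂volume ∂volume := by
        rw [lintegral_lintegral_swap]
        exact hk.enorm.aemeasurable.mul ((hf.enorm.pow_const 2).comp_quasiMeasurePreserving Measure.quasiMeasurePreserving_snd)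
    _ = ENNReal.ofReal α * ∫⁻ y, (‖f y‖₊ : ℝ≥0∞) ^ (2:ℕ) * ∫⁻ x, (‖k x y‖₊ : ℝ≥0∞) ∂volume ∂volume := by
        congr 1
        refine lintegral_congr fun y => ?_
        rw [← lintegral_const_mul' _ _ (ENNReal.pow_ne_top ENNReal.coe_ne_top)]
        simp [mul_comm]
    _ ≤ ENNReal.ofReal α * ∫⁻ y, (‖f y‖₊ : ℝ≥0∞) ^ (2:ℕ) * ENNReal.ofReal β ∂volume := by
        gcongr with y
        exact hcol y
    _ = ENNReal.ofReal α * ENNReal.ofReal β * ∫⁻ y, (‖f y‖₊ : ℝ≥0∞) ^ (2:ℕ) ∂volume := by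
        rw [mul_assoc]
        congr 1
        rw [lintegral_mul_const' _ _ ENNReal.ofReal_ne_top, mul_comm]

end Schur16

open Schur16

theorem stmt16 (n : ℕ) (k : (Fin n → ℝ) → (Fin n → ℝ) → ℂ)
    (hk : Measurable (Function.uncurry k)) (α β : ℝ) (hα : 0 ≤ α) (hβ : 0 ≤ β)
    (hrow : ∀ x, ∫⁻ y, ‖k x y‖₊ ∂volume ≤ ENNReal.ofReal α)
    (hcol : ∀ y, ∫⁻ x, ‖k x y‖₊ ∂volume ≤ ENNReal.ofReal β) :
    ∃ T : Lp ℂ 2 (volume : Measure (Fin n → ℝ)) →L[ℂ] Lp ℂ 2 (volume : Measure (Fin n → ℝ)),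
      ‖T‖ ≤ Real.sqrt (α * β) ∧
      ∀ u : Lp ℂ 2 (volume : Measure (Fin n → ℝ)),
        (∀ᵐ x : Fin n → ℝ, Integrable (fun y => k x y * u y)) ∧
        (∀ᵐ x : Fin n → ℝ, T u x = ∫ y, k x y * u y) := by
  have hFm : ∀ f : (Fin n → ℝ) → ℂ, AEStronglyMeasurable f volume →
      AEStronglyMeasurable (fun p : (Fin n → ℝ) × (Fin n → ℝ) => k p.1 p.2 * f p.2)
        ((volume : Measure (Fin n → ℝ)).prod volume) := fun f hf =>
    (hk.aestronglyMeasurable.mul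
      (hf.comp_quasiMeasurePreserving Measure.quasiMeasurePreserving_snd) : _)
  -- finiteness of ∫⁻ ‖u‖²
  have hNfin : ∀ u : Lp ℂ 2 (volume : Measure (Fin n → ℝ)),
      ∫⁻ y, (‖u y‖₊ : ℝ≥0∞) ^ (2:ℕ) ∂volume ≠ ∞ := by
    intro u
    have h := Lp.eLpNorm_lt_top u
    rw [eLpNorm_two] at h
    intro hc
    rw [hc] at h
    simp [ENNReal.rpow_eq_top_iff] at h
  -- a.e. integrability of slices
  have haeInt : ∀ u : Lp ℂ 2 (volume : Measure (Fin n → ℝ)),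
      ∀ᵐ x : Fin n → ℝ, Integrable (fun y => k x y * u y) volume := by
    intro u
    have hfm := Lp.aestronglyMeasurable u
    set f' := hfm.mk _ with hf'def
    have hff' : ⇑u =ᵐ[volume] f' := hfm.ae_eq_mk
    have hf'sm : StronglyMeasurable f' := hfm.stronglyMeasurable_mk
    have hGm : Measurable fun x => ∫⁻ y, (‖k x y‖₊ : ℝ≥0∞) * ‖f' y‖₊ ∂volume :=
      Measurable.lintegral_prod_right'
        (f := fun p : (Fin n → ℝ) × (Fin n → ℝ) => (‖k p.1 p.2‖₊ : ℝ≥0∞) * ‖f' p.2‖₊)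
        (hk.enorm.mul (hf'sm.measurable.enorm.comp measurable_snd))
    have hfin : ∫⁻ x, (∫⁻ y, (‖k x y‖₊ : ℝ≥0∞) * ‖f' y‖₊ ∂volume) ^ (2:ℕ) ∂volume ≠ ∞ := by
      refine ne_top_of_le_ne_top ?_ (key hk hrow hcol f' hf'sm.measurable.aemeasurable)
      have : ∫⁻ y, (‖f' y‖₊ : ℝ≥0∞) ^ (2:ℕ) ∂volume = ∫⁻ y, (‖u y‖₊ : ℝ≥0∞) ^ (2:ℕ) ∂volume :=
        lintegral_congr_ae (hff'.mono fun y hy => by simp [hy])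
      rw [this]
      exact ENNReal.mul_ne_top (ENNReal.mul_ne_top ENNReal.ofReal_ne_top ENNReal.ofReal_ne_top)
        (hNfin u)
    have hae : ∀ᵐ x : Fin n → ℝ, (∫⁻ y, (‖k x y‖₊ : ℝ≥0∞) * ‖f' y‖₊ ∂volume) ^ (2:ℕ) < ∞ :=
      ae_lt_top (hGm.pow_const 2) hfin
    filter_upwards [hae, (hFm _ hfm).prodMk_left] with x hx hxm
    refine ⟨hxm, ?_⟩
    have heq : ∫⁻ y, (‖(fun y => k x y * u y) y‖₊ : ℝ≥0∞) ∂volume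
        = ∫⁻ y, (‖k x y‖₊ : ℝ≥0∞) * ‖f' y‖₊ ∂volume := by
      refine lintegral_congr_ae (hff'.mono fun y hy => ?_)
      simp [hy, nnnorm_mul, ENNReal.coe_mul]
    show (∫⁻ y, (‖(fun y => k x y * u y) y‖₊ : ℝ≥0∞) ∂volume) < ∞
    rw [heq]
    refine lt_top_iff_ne_top.2 fun hc => ?_
    rw [hc, ENNReal.top_pow (by norm_num)] at hx
    exact lt_irrefl _ hx
  -- the L² membership and norm bound for the image
  have gbound : ∀ u : Lp ℂ 2 (volume : Measure (Fin n → ℝ)),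
      eLpNorm (fun x => ∫ y, k x y * u y ∂volume) 2 volume
        ≤ ENNReal.ofReal (Real.sqrt (α * β)) * eLpNorm (⇑u) 2 volume := by
    intro u
    rw [eLpNorm_two, eLpNorm_two]
    have hpt : ∀ x : Fin n → ℝ, (‖∫ y, k x y * u y ∂volume‖₊ : ℝ≥0∞) ^ (2:ℕ)
        ≤ (∫⁻ y, (‖k x y‖₊ : ℝ≥0∞) * ‖u y‖₊ ∂volume) ^ (2:ℕ) := by
      intro x
      refine pow_le_pow_left' ?_ 2
      refine le_trans (enorm_integral_le_lintegral_enorm _) ?_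
      refine le_of_eq (lintegral_congr fun y => ?_)
      simp [nnnorm_mul, ENNReal.coe_mul]
      rfl
    have h1 : ∫⁻ x, (‖∫ y, k x y * u y ∂volume‖₊ : ℝ≥0∞) ^ (2:ℕ) ∂volume
        ≤ ENNReal.ofReal (Real.sqrt (α * β)) ^ (2:ℕ) * ∫⁻ y, (‖u y‖₊ : ℝ≥0∞) ^ (2:ℕ) ∂volume := by
      refine le_trans (lintegral_mono hpt) ?_
      refine le_trans (key hk hrow hcol _ (Lp.aestronglyMeasurable u).aemeasurable) ?_
      have : ENNReal.ofReal α * ENNReal.ofReal β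
          = ENNReal.ofReal (Real.sqrt (α * β)) ^ (2:ℕ) := by
        rw [← ENNReal.ofReal_mul hα, ← ENNReal.ofReal_pow (Real.sqrt_nonneg _),
          Real.sq_sqrt (mul_nonneg hα hβ)]
      rw [this]
    calc (∫⁻ x, (‖∫ y, k x y * u y ∂volume‖₊ : ℝ≥0∞) ^ (2:ℕ) ∂volume) ^ (1/2 : ℝ)
        ≤ (ENNReal.ofReal (Real.sqrt (α * β)) ^ (2:ℕ)
            * ∫⁻ y, (‖u y‖₊ : ℝ≥0∞) ^ (2:ℕ) ∂volume) ^ (1/2 : ℝ) := by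
          exact ENNReal.rpow_le_rpow h1 (by norm_num)
      _ = ENNReal.ofReal (Real.sqrt (α * β))
            * (∫⁻ y, (‖u y‖₊ : ℝ≥0∞) ^ (2:ℕ) ∂volume) ^ (1/2 : ℝ) := by
          rw [ENNReal.mul_rpow_of_nonneg _ _ (by norm_num : (0:ℝ) ≤ 1/2), Schur16.pow_half]
  have gmem : ∀ u : Lp ℂ 2 (volume : Measure (Fin n → ℝ)),
      MemLp (fun x => ∫ y, k x y * u y ∂volume) 2 volume := by
    intro u
    refine ⟨(hFm _ (Lp.aestronglyMeasurable u)).integral_prod_right', ?_⟩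
    refine lt_of_le_of_lt (gbound u) ?_
    exact ENNReal.mul_lt_top ENNReal.ofReal_lt_top (Lp.eLpNorm_lt_top u)
  -- the linear map
  let L : Lp ℂ 2 (volume : Measure (Fin n → ℝ)) →ₗ[ℂ] Lp ℂ 2 (volume : Measure (Fin n → ℝ)) :=
    { toFun := fun u => (gmem u).toLp _
      map_add' := by
        intro u v
        rw [← MemLp.toLp_add (gmem u) (gmem v)]
        refine MemLp.toLp_congr _ _ ?_
        filter_upwards [haeInt u, haeInt v] with x hIu hIv
        exact (integral_congr_ae ((AEEqFun.coeFn_add (u : (Fin n → ℝ) →ₘ[volume] ℂ) (v : (Fin n → ℝ) →ₘ[volume] ℂ)).mono fun y hy => by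
          simp [hy, mul_add])).trans (integral_add hIu hIv)
      map_smul' := by
        intro c u
        simp only [RingHom.id_apply]
        rw [← MemLp.toLp_const_smul c (gmem u)]
        refine MemLp.toLp_congr _ _ ?_
        refine Filter.Eventually.of_forall fun x => ?_
        exact (integral_congr_ae ((Lp.coeFn_smul c u).mono fun y hy => by
          simp only [hy, Pi.smul_apply, smul_eq_mul]; ring)).trans
            (integral_smul c fun y => k x y * u y) }
  have hLbound : ∀ u : Lp ℂ 2 (volume : Measure (Fin n → ℝ)),
      ‖L u‖ ≤ Real.sqrt (α * β) * ‖u‖ := by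
    intro u
    have h1 : ‖L u‖ = (eLpNorm (fun x => ∫ y, k x y * u y ∂volume) 2 volume).toReal :=
      Lp.norm_toLp _ (gmem u)
    rw [h1, Lp.norm_def]
    have hne : ENNReal.ofReal (Real.sqrt (α * β)) * eLpNorm (⇑u) 2 volume ≠ ⊤ :=
      ENNReal.mul_ne_top ENNReal.ofReal_ne_top (Lp.eLpNorm_ne_top u)
    refine le_trans (ENNReal.toReal_mono hne (gbound u)) ?_
    rw [ENNReal.toReal_mul, ENNReal.toReal_ofReal (Real.sqrt_nonneg _)]
  refine ⟨LinearMap.mkContinuous L (Real.sqrt (α * β)) hLbound,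
    LinearMap.mkContinuous_norm_le _ (Real.sqrt_nonneg _) _, fun u => ⟨haeInt u, ?_⟩⟩
  exact MemLp.coeFn_toLp (gmem u)
end
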